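/- Let g be a CRT excursion and let S be an i.i.d. random sequence of signs with P(S_i = ⊕) = p ∈ (0,1). Then almost surely the signed excursion (g,S) satisfies property (A): for all i ≠ j with [a'_j,c'_j] ⊆ [a'_i,c'_i], the sets {h_l : [a'_l,c'_l] ⊆ [a'_i,c'_i], [a'_j,c'_j] ⊆ [b'_l,c'_l]} and {h_l : [a'_l,c'_l] ⊆ [a'_i,c'_i], [a'_j,c'_j] ⊆ [a'_l,b'_l]} are dense in [h_i,h_j]. -/

import Mathlib

open MeasureTheory Set

noncomputable section

/-- `x` is not a one-sided minimum of `g`. -/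
def NotOneSidedMin (g : ℝ → ℝ) (x : ℝ) : Prop :=
  x ∈ Set.Ioo (0:ℝ) 1 ∧ ∀ ε > 0, (∃ x₁ ∈ Set.Ioo (x-ε) x, g x₁ < g x) ∧
    (∃ x₂ ∈ Set.Ioo x (x+ε), g x₂ < g x)

/-- `b` is an inner local minimum of `g`. -/
def IsInnerLocalMin (g : ℝ → ℝ) (b : ℝ) : Prop :=
  b ∈ Set.Ioo (0:ℝ) 1 ∧ ∃ ε > 0, ∀ x ∈ Set.Ioo (b-ε) (b+ε), g b ≤ g x

/-- `b` is a strict (inner) local minimum of `g`. -/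
def IsStrictLocalMin (g : ℝ → ℝ) (b : ℝ) : Prop :=
  b ∈ Set.Ioo (0:ℝ) 1 ∧ ∃ ε > 0, ∀ x ∈ Set.Ioo (b-ε) (b+ε), x ≠ b → g b < g x

/-- A CRT excursion. -/
structure IsCRT (g : ℝ → ℝ) : Prop where
  cont : ContinuousOn g (Set.Icc 0 1)
  nonneg : ∀ t ∈ Set.Icc (0:ℝ) 1, 0 ≤ g t
  pos : ∀ t ∈ Set.Ioo (0:ℝ) 1, 0 < g t
  zero0 : g 0 = 0
  zero1 : g 1 = 0
  dense_min : ∀ x ∈ Set.Icc (0:ℝ) 1, x ∈ closure {b | IsInnerLocalMin g b}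
  distinct : ∀ b b', IsInnerLocalMin g b → IsInnerLocalMin g b' → g b = g b' → b = b'
  leaves_full : volume {x | NotOneSidedMin g x} = 1

/-- `β` is the unique minimum point of `g` on `[x,y]`, lies in `(x,y)`,
and is a strict local minimum: the most recent common ancestor of `x < y`. -/
def IsMrca (g : ℝ → ℝ) (β x y : ℝ) : Prop :=
  x < y ∧ β ∈ Set.Ioo x y ∧ IsStrictLocalMin g β ∧
    (∀ t ∈ Set.Icc x y, g β ≤ g t) ∧ (∀ t ∈ Set.Icc x y, g t = g β → t = β)

/-- `x` and `y` are `g`-comparable. -/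
def GComparable (g : ℝ → ℝ) (x y : ℝ) : Prop :=
  ∃ β, IsMrca g β (min x y) (max x y)

/-- `b` enumerates (injectively) the strict local minima of `g`. -/
def IsEnum (g : ℝ → ℝ) (b : ℕ → ℝ) : Prop :=
  Function.Injective b ∧ ∀ β, IsStrictLocalMin g β ↔ ∃ i, b i = β

/-- The sign-shuffled comparison relation `u ⊲ v` : if the mrca of `u,v` carries
sign `⊕` (`true`) then the smaller goes first, otherwise the bigger goes first. -/
def Tri (g : ℝ → ℝ) (b : ℕ → ℝ) (s : ℕ → Bool) (u v : ℝ) : Prop :=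
  ∃ i, (IsMrca g (b i) u v ∧ s i = true) ∨ (IsMrca g (b i) v u ∧ s i = false)

/-- The measure-preserving function `φ_{g,s}`. -/
def phi (g : ℝ → ℝ) (b : ℕ → ℝ) (s : ℕ → Bool) (t : ℝ) : ℝ :=
  (volume {u ∈ Set.Icc (0:ℝ) 1 | Tri g b s u t}).toReal

def aPt (g : ℝ → ℝ) (β : ℝ) : ℝ := sSup {t | t < β ∧ g t = g β}
def cPt (g : ℝ → ℝ) (β : ℝ) : ℝ := sInf {t | β < t ∧ g t = g β}

def aI (g : ℝ → ℝ) (b : ℕ → ℝ) (i : ℕ) : ℝ := aPt g (b i)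
def cI (g : ℝ → ℝ) (b : ℕ → ℝ) (i : ℕ) : ℝ := cPt g (b i)
def aI' (g : ℝ → ℝ) (b : ℕ → ℝ) (s : ℕ → Bool) (i : ℕ) : ℝ := phi g b s (aI g b i)
def cI' (g : ℝ → ℝ) (b : ℕ → ℝ) (s : ℕ → Bool) (i : ℕ) : ℝ :=
  aI' g b s i + (cI g b i - aI g b i)
def bI' (g : ℝ → ℝ) (b : ℕ → ℝ) (s : ℕ → Bool) (i : ℕ) : ℝ :=
  aI' g b s i + (if s i then b i - aI g b i else cI g b i - b i)

/-- The permuton `μ_{g,s} = (Id, φ_{g,s})_* Leb`. -/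
def permuton (g : ℝ → ℝ) (b : ℕ → ℝ) (s : ℕ → Bool) : Measure (ℝ × ℝ) :=
  Measure.map (fun t => (t, phi g b s t)) (volume.restrict (Set.Icc 0 1))

/-- Property (A) of a signed excursion. -/
def PropA (g : ℝ → ℝ) (b : ℕ → ℝ) (s : ℕ → Bool) : Prop :=
  ∀ i j, i ≠ j →
    Set.Icc (aI' g b s j) (cI' g b s j) ⊆ Set.Icc (aI' g b s i) (cI' g b s i) →
    (∀ y ∈ Set.Icc (g (b i)) (g (b j)),
      y ∈ closure {h | ∃ l, h = g (b l) ∧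
        Set.Icc (aI' g b s l) (cI' g b s l) ⊆ Set.Icc (aI' g b s i) (cI' g b s i) ∧
        Set.Icc (aI' g b s j) (cI' g b s j) ⊆ Set.Icc (bI' g b s l) (cI' g b s l)}) ∧
    (∀ y ∈ Set.Icc (g (b i)) (g (b j)),
      y ∈ closure {h | ∃ l, h = g (b l) ∧
        Set.Icc (aI' g b s l) (cI' g b s l) ⊆ Set.Icc (aI' g b s i) (cI' g b s i) ∧
        Set.Icc (aI' g b s j) (cI' g b s j) ⊆ Set.Icc (aI' g b s l) (bI' g b s l)})

/-- The shuffled excursion `f_{g,s}`. -/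
def fShuffle (g : ℝ → ℝ) (b : ℕ → ℝ) (s : ℕ → Bool) (t : ℝ) : ℝ :=
  ⨆ i, Set.indicator (Set.Icc (aI' g b s i) (cI' g b s i)) (fun _ => g (b i)) t

/-- Topological support of a measure. -/
def mSupport {α : Type*} [TopologicalSpace α] [MeasurableSpace α] (μ : Measure α) : Set α :=
  {x | ∀ U : Set α, IsOpen U → x ∈ U → μ U ≠ 0}

section
variable {g : ℝ → ℝ} {β x : ℝ}


lemma IsStrictLocalMin.innerMin (h : IsStrictLocalMin g β) : IsInnerLocalMin g β := by
  obtain ⟨hmem, ε, hε, hlt⟩ := h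
  refine ⟨hmem, ε, hε, fun x hx => ?_⟩
  rcases eq_or_ne x β with rfl | hne
  · exact le_rfl
  · exact (hlt x hx hne).le

lemma innerMin_strict (hg : IsCRT g) (h : IsInnerLocalMin g β) : IsStrictLocalMin g β := by
  obtain ⟨hmem, ε, hε, hle⟩ := h
  obtain ⟨h0, h1⟩ := hmem
  set ε' := min ε (min β (1-β)) with hε'def
  have hε'1 : ε' ≤ ε := min_le_left _ _
  have hε'2 : ε' ≤ β := (min_le_right _ _).trans (min_le_left _ _)
  have hε'3 : ε' ≤ 1 - β := (min_le_right _ _).trans (min_le_right _ _)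
  have hε'pos : 0 < ε' := lt_min hε (lt_min h0 (by linarith))
  refine ⟨⟨h0, h1⟩, ε', hε'pos, fun x hx hne => ?_⟩
  by_contra hcon
  push_neg at hcon
  have hxβ : g x = g β :=
    le_antisymm hcon (hle x ⟨by linarith [hx.1], by linarith [hx.2]⟩)
  have hx0 : 0 < x := by linarith [hx.1]
  have hx1 : x < 1 := by linarith [hx.2]
  have habs : |x - β| < ε' := abs_sub_lt_iff.mpr ⟨by linarith [hx.2], by linarith [hx.1]⟩
  have hxinner : IsInnerLocalMin g x := by
    refine ⟨⟨hx0, hx1⟩, ε' - |x - β|, by linarith, fun y hy => ?_⟩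
    have h1' : |y - x| < ε' - |x - β| :=
      abs_sub_lt_iff.mpr ⟨by linarith [hy.2], by linarith [hy.1]⟩
    have h2' : |y - β| < ε := by
      calc |y - β| ≤ |y - x| + |x - β| := abs_sub_le _ _ _
        _ < ε' := by linarith
        _ ≤ ε := hε'1
    rw [hxβ]
    exact hle y ⟨by linarith [(abs_sub_lt_iff.mp h2').2], by linarith [(abs_sub_lt_iff.mp h2').1]⟩
  exact hne (hg.distinct x β hxinner ⟨⟨h0,h1⟩, ε, hε, hle⟩ hxβ)

/-- Bundled facts about the block of a strict local minimum. -/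
structure BF (g : ℝ → ℝ) (β : ℝ) : Prop where
  strict : IsStrictLocalMin g β
  a_pos : 0 < aPt g β
  a_lt : aPt g β < β
  lt_c : β < cPt g β
  c_lt : cPt g β < 1
  ga : g (aPt g β) = g β
  gc : g (cPt g β) = g β
  left : ∀ t, aPt g β < t → t < β → g β < g t
  right : ∀ t, β < t → t < cPt g β → g β < g t

lemma isCRT_contOn (hg : IsCRT g) {u v : ℝ} (hu : 0 ≤ u) (hv : v ≤ 1) :
    ContinuousOn g (Set.Icc u v) :=
  hg.cont.mono (Set.Icc_subset_Icc hu hv)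

lemma bf_of_strict (hg : IsCRT g) (hβ : IsStrictLocalMin g β) : BF g β := by
  obtain ⟨⟨h0, h1⟩, ε, hε, hlt⟩ := hβ
  have hβs : IsStrictLocalMin g β := ⟨⟨h0, h1⟩, ε, hε, hlt⟩
  set ε₀ := min ε (min (β/2) ((1-β)/2)) with hε₀def
  have hε₀pos : 0 < ε₀ := lt_min hε (lt_min (by linarith) (by linarith))
  have hε₀ε : ε₀ ≤ ε := min_le_left _ _
  have hε₀β : ε₀ ≤ β/2 := (min_le_right _ _).trans (min_le_left _ _)
  have hε₀β' : ε₀ ≤ (1-β)/2 := (min_le_right _ _).trans (min_le_right _ _)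
  have hpos : 0 < g β := hg.pos β ⟨h0, h1⟩
  have hml : g β < g (β - ε₀/2) := by
    refine hlt _ ⟨by linarith, by linarith⟩ (by intro hcon; linarith)
  have hmr : g β < g (β + ε₀/2) := by
    refine hlt _ ⟨by linarith, by linarith⟩ (by intro hcon; linarith)
  -- closed set of points with value g β inside [0,1]
  have hC : IsClosed {t ∈ Set.Icc (0:ℝ) 1 | g t = g β} := by
    have h' := hg.cont.preimage_isClosed_of_isClosed isClosed_Icc
      (isClosed_singleton (x := g β))
    have : Set.Icc (0:ℝ) 1 ∩ g ⁻¹' {g β} = {t ∈ Set.Icc (0:ℝ) 1 | g t = g β} := by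
      ext t; simp [Set.mem_inter_iff, Set.mem_preimage, Set.mem_singleton_iff, Set.mem_sep_iff]
    rwa [this] at h'
  -- LEFT side
  have hA : ∃ t₀ ∈ Set.Icc (0:ℝ) (β - ε₀/2), g t₀ = g β := by
    have hIVT := intermediate_value_Icc (by linarith : (0:ℝ) ≤ β - ε₀/2)
      (isCRT_contOn hg le_rfl (by linarith))
    have : g β ∈ Set.Icc (g 0) (g (β - ε₀/2)) := by
      rw [hg.zero0]; exact ⟨hpos.le, hml.le⟩
    obtain ⟨t₀, ht₀, hgt₀⟩ := hIVT this
    exact ⟨t₀, ht₀, hgt₀⟩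
  obtain ⟨t₀, ht₀mem, hgt₀⟩ := hA
  have ht₀pos : 0 < t₀ := by
    rcases lt_or_eq_of_le ht₀mem.1 with h | h
    · exact h
    · exfalso; rw [← h, hg.zero0] at hgt₀; linarith
  have ht₀A : t₀ ∈ {t | t < β ∧ g t = g β} := ⟨by linarith [ht₀mem.2], hgt₀⟩
  have hAbdd : BddAbove {t | t < β ∧ g t = g β} := ⟨β, fun t ht => ht.1.le⟩
  have hAne : Set.Nonempty {t | t < β ∧ g t = g β} := ⟨t₀, ht₀A⟩
  have haub : aPt g β ≤ β - ε₀ := by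
    refine csSup_le hAne fun t ht => ?_
    by_contra hcon
    push_neg at hcon
    exact absurd ht.2 (ne_of_gt (hlt t ⟨by linarith, by linarith [ht.1]⟩ (ne_of_lt ht.1)))
  have halb : t₀ ≤ aPt g β := le_csSup hAbdd ht₀A
  have ha_pos : 0 < aPt g β := lt_of_lt_of_le ht₀pos halb
  have ha_lt : aPt g β < β := by linarith
  have hga : g (aPt g β) = g β := by
    -- sSup of A equals sSup of A ∩ Icc 0 1 and lies in the closed set hC
    have hsub : {t | t < β ∧ g t = g β} ∩ Set.Icc 0 1 ⊆ {t ∈ Set.Icc (0:ℝ) 1 | g t = g β} :=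
      fun t ht => ⟨ht.2, ht.1.2⟩
    have hA'ne : Set.Nonempty ({t | t < β ∧ g t = g β} ∩ Set.Icc 0 1) :=
      ⟨t₀, ht₀A, ⟨ht₀pos.le, by linarith [ht₀mem.2]⟩⟩
    have hA'bdd : BddAbove ({t | t < β ∧ g t = g β} ∩ Set.Icc 0 1) :=
      hAbdd.mono Set.inter_subset_left
    have heq : aPt g β = sSup ({t | t < β ∧ g t = g β} ∩ Set.Icc 0 1) := by
      apply le_antisymm
      · refine csSup_le hAne fun t ht => ?_
        rcases le_or_gt t t₀ with h | h
        · exact h.trans (le_csSup hA'bdd ⟨ht₀A, ⟨ht₀pos.le, by linarith [ht₀mem.2]⟩⟩)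
        · exact le_csSup hA'bdd ⟨ht, ⟨by linarith, by linarith [ht.1]⟩⟩
      · exact csSup_le_csSup hAbdd hA'ne Set.inter_subset_left
    have hmem : aPt g β ∈ {t ∈ Set.Icc (0:ℝ) 1 | g t = g β} := by
      rw [heq]
      exact hC.closure_subset ((closure_mono hsub)
        ((Real.isLUB_sSup hA'ne hA'bdd).mem_closure hA'ne))
    exact hmem.2
  have hleft : ∀ t, aPt g β < t → t < β → g β < g t := by
    intro t hat htβ
    rcases lt_or_ge (β - ε₀) t with h | h
    · exact hlt t ⟨by linarith, by linarith⟩ (ne_of_lt htβ)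
    · have htA : t ∉ {t | t < β ∧ g t = g β} := fun hmem => absurd (le_csSup hAbdd hmem) (not_le.mpr hat)
      have hne : g t ≠ g β := fun hcon => htA ⟨htβ, hcon⟩
      rcases lt_or_ge (g β) (g t) with h' | h'
      · exact h'
      exfalso
      have hIVT := intermediate_value_Icc (by linarith : t ≤ β - ε₀/2)
        (isCRT_contOn hg (by linarith) (by linarith))
      have : g β ∈ Set.Icc (g t) (g (β - ε₀/2)) := ⟨h', hml.le⟩
      obtain ⟨t', ht'mem, hgt'⟩ := hIVT this
      have hmem' : t' ∈ {t | t < β ∧ g t = g β} := ⟨by linarith [ht'mem.2], hgt'⟩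
      have hle' : t' ≤ aPt g β := le_csSup hAbdd hmem'
      linarith [ht'mem.1]
  -- RIGHT side
  have hB : ∃ t₁ ∈ Set.Icc (β + ε₀/2) 1, g t₁ = g β := by
    have hIVT := intermediate_value_Icc' (by linarith : β + ε₀/2 ≤ 1)
      (isCRT_contOn hg (by linarith) le_rfl)
    have : g β ∈ Set.Icc (g 1) (g (β + ε₀/2)) := by
      rw [hg.zero1]; exact ⟨hpos.le, hmr.le⟩
    obtain ⟨t₁, ht₁, hgt₁⟩ := hIVT this
    exact ⟨t₁, ht₁, hgt₁⟩
  obtain ⟨t₁, ht₁mem, hgt₁⟩ := hB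
  have ht₁lt : t₁ < 1 := by
    rcases lt_or_eq_of_le ht₁mem.2 with h | h
    · exact h
    · exfalso; rw [h, hg.zero1] at hgt₁; linarith
  have ht₁B : t₁ ∈ {t | β < t ∧ g t = g β} := ⟨by linarith [ht₁mem.1], hgt₁⟩
  have hBbdd : BddBelow {t | β < t ∧ g t = g β} := ⟨β, fun t ht => ht.1.le⟩
  have hBne : Set.Nonempty {t | β < t ∧ g t = g β} := ⟨t₁, ht₁B⟩
  have hclb : β + ε₀ ≤ cPt g β := by
    refine le_csInf hBne fun t ht => ?_
    by_contra hcon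
    push_neg at hcon
    exact absurd ht.2 (ne_of_gt (hlt t ⟨by linarith [ht.1], by linarith⟩ (ne_of_gt ht.1)))
  have hcub : cPt g β ≤ t₁ := csInf_le hBbdd ht₁B
  have hc_lt : cPt g β < 1 := lt_of_le_of_lt hcub ht₁lt
  have hlt_c : β < cPt g β := by linarith
  have hgc : g (cPt g β) = g β := by
    have hsub : {t | β < t ∧ g t = g β} ∩ Set.Icc 0 1 ⊆ {t ∈ Set.Icc (0:ℝ) 1 | g t = g β} :=
      fun t ht => ⟨ht.2, ht.1.2⟩
    have hB'ne : Set.Nonempty ({t | β < t ∧ g t = g β} ∩ Set.Icc 0 1) :=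
      ⟨t₁, ht₁B, ⟨by linarith [ht₁mem.1], ht₁mem.2⟩⟩
    have hB'bdd : BddBelow ({t | β < t ∧ g t = g β} ∩ Set.Icc 0 1) :=
      hBbdd.mono Set.inter_subset_left
    have heq : cPt g β = sInf ({t | β < t ∧ g t = g β} ∩ Set.Icc 0 1) := by
      apply le_antisymm
      · exact csInf_le_csInf hBbdd hB'ne Set.inter_subset_left
      · refine le_csInf hBne fun t ht => ?_
        rcases le_or_gt t₁ t with h | h
        · exact (csInf_le hB'bdd ⟨ht₁B, ⟨by linarith [ht₁mem.1], ht₁mem.2⟩⟩).trans h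
        · exact csInf_le hB'bdd ⟨ht, ⟨by linarith [ht.1], by linarith⟩⟩
    have hmem : cPt g β ∈ {t ∈ Set.Icc (0:ℝ) 1 | g t = g β} := by
      rw [heq]
      exact hC.closure_subset ((closure_mono hsub)
        ((Real.isGLB_sInf hB'ne hB'bdd).mem_closure hB'ne))
    exact hmem.2
  have hright : ∀ t, β < t → t < cPt g β → g β < g t := by
    intro t hβt htc
    rcases lt_or_ge t (β + ε₀) with h | h
    · exact hlt t ⟨by linarith, by linarith⟩ (ne_of_gt hβt)
    · have htB : t ∉ {t | β < t ∧ g t = g β} := fun hmem => absurd (csInf_le hBbdd hmem) (not_le.mpr htc)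
      have hne : g t ≠ g β := fun hcon => htB ⟨hβt, hcon⟩
      rcases lt_or_ge (g β) (g t) with h' | h'
      · exact h'
      exfalso
      have hIVT := intermediate_value_Icc' (by linarith : β + ε₀/2 ≤ t)
        (isCRT_contOn hg (by linarith) (by linarith [hcub, ht₁mem.2]))
      have : g β ∈ Set.Icc (g t) (g (β + ε₀/2)) := ⟨h', hmr.le⟩
      obtain ⟨t', ht'mem, hgt'⟩ := hIVT this
      have hmem' : t' ∈ {t | β < t ∧ g t = g β} := ⟨by linarith [ht'mem.1], hgt'⟩
      have hle' : cPt g β ≤ t' := csInf_le hBbdd hmem'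
      linarith [ht'mem.2]
  exact ⟨hβs, ha_pos, ha_lt, hlt_c, hc_lt, hga, hgc, hleft, hright⟩

section

variable {g : ℝ → ℝ} {b : ℕ → ℝ} {s : ℕ → Bool} {β γ x y u v w : ℝ}

lemma strict_eq (hg : IsCRT g) (h1 : IsStrictLocalMin g β) (h2 : IsStrictLocalMin g γ)
    (h : g β = g γ) : β = γ :=
  hg.distinct _ _ h1.innerMin h2.innerMin h

lemma BF.gt_on (hbf : BF g β) : ∀ t ∈ Set.Ioo (aPt g β) (cPt g β), t ≠ β → g β < g t := by
  intro t ht hne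
  rcases lt_trichotomy t β with h | h | h
  · exact hbf.left t ht.1 h
  · exact absurd h hne
  · exact hbf.right t h ht.2

lemma BF.ge_on (hbf : BF g β) : ∀ t ∈ Set.Icc (aPt g β) (cPt g β), g β ≤ g t := by
  intro t ht
  rcases eq_or_lt_of_le ht.1 with h | h
  · rw [← h, hbf.ga]
  rcases eq_or_lt_of_le ht.2 with h' | h'
  · rw [h', hbf.gc]
  rcases eq_or_ne t β with rfl | hne
  · exact le_rfl
  · exact (hbf.gt_on t ⟨h, h'⟩ hne).le

lemma BF.a_not_strict (hg : IsCRT g) (hbf : BF g β) : ¬ IsStrictLocalMin g (aPt g β) :=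
  fun h => absurd (strict_eq hg h hbf.strict hbf.ga) (ne_of_lt hbf.a_lt)

lemma BF.c_not_strict (hg : IsCRT g) (hbf : BF g β) : ¬ IsStrictLocalMin g (cPt g β) :=
  fun h => absurd (strict_eq hg h hbf.strict hbf.gc) (ne_of_gt hbf.lt_c)

lemma IsMrca.uniquePt (h1 : IsMrca g γ x y) (h2 : IsMrca g β x y) : γ = β := by
  have hγ : γ ∈ Set.Icc x y := Set.Ioo_subset_Icc_self h1.2.1
  have hβ : β ∈ Set.Icc x y := Set.Ioo_subset_Icc_self h2.2.1
  exact h2.2.2.2.2 γ hγ (le_antisymm (h1.2.2.2.1 β hβ) (h2.2.2.2.1 γ hγ))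

lemma interior_argmin_inner (hg : IsCRT g) (hu : 0 ≤ u) (hv : v ≤ 1) (hγ : γ ∈ Set.Ioo u v)
    (hmin : ∀ t ∈ Set.Icc u v, g γ ≤ g t) : IsInnerLocalMin g γ := by
  refine ⟨⟨lt_of_le_of_lt hu hγ.1, lt_of_lt_of_le hγ.2 hv⟩,
    min (γ - u) (v - γ), lt_min (by linarith [hγ.1]) (by linarith [hγ.2]), fun t ht => ?_⟩
  refine hmin t ⟨?_, ?_⟩
  · have := min_le_left (γ - u) (v - γ); linarith [ht.1]
  · have := min_le_right (γ - u) (v - γ); linarith [ht.2]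

lemma mrca_of_min (hg : IsCRT g) (hxy : x < y) (hx : 0 ≤ x) (hy : y ≤ 1)
    (hγ : γ ∈ Set.Ioo x y) (hmin : ∀ t ∈ Set.Icc x y, g γ ≤ g t)
    (huniq : ∀ t ∈ Set.Icc x y, g t = g γ → t = γ) : IsMrca g γ x y :=
  ⟨hxy, hγ, innerMin_strict hg (interior_argmin_inner hg hx hy hγ hmin), hmin, huniq⟩

lemma mrca_transfer_right (hxw : x ≤ w) (hux : u < x)
    (hge : ∀ t ∈ Set.Icc x w, g x ≤ g t) (hxs : ¬ IsStrictLocalMin g x) :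
    IsMrca g γ u x ↔ IsMrca g γ u w := by
  constructor
  · rintro ⟨hlt', hmem, hstrict, hmin, huniq⟩
    have hγx : g γ < g x := by
      rcases eq_or_lt_of_le (hmin x ⟨hux.le, le_rfl⟩) with h | h
      · exact absurd (huniq x ⟨hux.le, le_rfl⟩ h.symm) (ne_of_gt hmem.2)
      · exact h
    refine ⟨hux.trans_le hxw, ⟨hmem.1, hmem.2.trans_le hxw⟩, hstrict, ?_, ?_⟩
    · intro t ht
      rcases le_or_gt t x with h | h
      · exact hmin t ⟨ht.1, h⟩
      · exact hγx.le.trans (hge t ⟨h.le, ht.2⟩)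
    · intro t ht heq
      rcases le_or_gt t x with h | h
      · exact huniq t ⟨ht.1, h⟩ heq
      · exact absurd heq (by have := hge t ⟨h.le, ht.2⟩; intro hc; linarith)
  · rintro ⟨hlt', hmem, hstrict, hmin, huniq⟩
    have hγx : g γ < g x := by
      rcases eq_or_lt_of_le (hmin x ⟨hux.le, hxw⟩) with h | h
      · exact absurd hstrict (by rw [huniq x ⟨hux.le, hxw⟩ h.symm] at hxs; exact hxs)
      · exact h
    have hγltx : γ < x := by
      by_contra hcon
      push_neg at hcon
      exact absurd (hge γ ⟨hcon, hmem.2.le⟩) (not_le.mpr hγx)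
    exact ⟨hux, ⟨hmem.1, hγltx⟩, hstrict,
      fun t ht => hmin t ⟨ht.1, ht.2.trans hxw⟩,
      fun t ht heq => huniq t ⟨ht.1, ht.2.trans hxw⟩ heq⟩

lemma mrca_transfer_left (hwx : w ≤ x) (hxu : x < u)
    (hge : ∀ t ∈ Set.Icc w x, g x ≤ g t) (hxs : ¬ IsStrictLocalMin g x) :
    IsMrca g γ x u ↔ IsMrca g γ w u := by
  constructor
  · rintro ⟨hlt', hmem, hstrict, hmin, huniq⟩
    have hγx : g γ < g x := by
      rcases eq_or_lt_of_le (hmin x ⟨le_rfl, hxu.le⟩) with h | h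
      · exact absurd (huniq x ⟨le_rfl, hxu.le⟩ h.symm) (ne_of_lt hmem.1)
      · exact h
    refine ⟨lt_of_le_of_lt hwx hxu, ⟨lt_of_le_of_lt hwx hmem.1, hmem.2⟩, hstrict, ?_, ?_⟩
    · intro t ht
      rcases le_or_gt x t with h | h
      · exact hmin t ⟨h, ht.2⟩
      · exact hγx.le.trans (hge t ⟨ht.1, h.le⟩)
    · intro t ht heq
      rcases le_or_gt x t with h | h
      · exact huniq t ⟨h, ht.2⟩ heq
      · exact absurd heq (by have := hge t ⟨ht.1, h.le⟩; intro hc; linarith)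
  · rintro ⟨hlt', hmem, hstrict, hmin, huniq⟩
    have hγx : g γ < g x := by
      rcases eq_or_lt_of_le (hmin x ⟨hwx, hxu.le⟩) with h | h
      · exact absurd hstrict (by rw [huniq x ⟨hwx, hxu.le⟩ h.symm] at hxs; exact hxs)
      · exact h
    have hγgtx : x < γ := by
      by_contra hcon
      push_neg at hcon
      exact absurd (hge γ ⟨hmem.1.le, hcon⟩) (not_le.mpr hγx)
    exact ⟨hxu, ⟨hγgtx, hmem.2⟩, hstrict,
      fun t ht => hmin t ⟨(hwx.trans ht.1 : w ≤ t), ht.2⟩,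
      fun t ht heq => huniq t ⟨hwx.trans ht.1, ht.2⟩ heq⟩

/-- Inside the (open) block of `b l`, no point is `Tri`-comparable with `aPt (b l)`. -/
lemma not_tri_inside (hbf : BF g (b l)) (hu : u ∈ Set.Ioo (aPt g (b l)) (cPt g (b l))) :
    ¬ Tri g b s u (aPt g (b l)) := by
  rintro ⟨i, ⟨hm, -⟩ | ⟨hm, -⟩⟩
  · exact absurd hm.1 (not_lt.mpr hu.1.le)
  · obtain ⟨hlt', hmem, hstrict, hmin, huniq⟩ := hm
    have hγ : b i ∈ Set.Ioo (aPt g (b l)) (cPt g (b l)) :=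
      ⟨hmem.1, lt_of_lt_of_le hmem.2 hu.2.le⟩
    have h1 : g (b i) ≤ g (b l) := by
      have := hmin (aPt g (b l)) ⟨le_rfl, hmem.1.le.trans hmem.2.le⟩
      rwa [hbf.ga] at this
    rcases eq_or_ne (b i) (b l) with heq | hne
    · have : aPt g (b l) = b i :=
        huniq (aPt g (b l)) ⟨le_rfl, hmem.1.le.trans hmem.2.le⟩ (by rw [hbf.ga, heq])
      exact absurd this (ne_of_lt hmem.1)
    · exact absurd h1 (not_le.mpr (hbf.gt_on (b i) hγ hne))

/-- Outside the closed block of `b l`, `Tri`-comparison with any point of the block is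
the same as with `aPt (b l)`. -/
lemma tri_congr_outside (hg : IsCRT g) (hbf : BF g (b l))
    (hw : w ∈ Set.Icc (aPt g (b l)) (cPt g (b l)))
    (hu : u ∉ Set.Icc (aPt g (b l)) (cPt g (b l))) :
    (Tri g b s u w ↔ Tri g b s u (aPt g (b l))) := by
  have hac : aPt g (b l) ≤ cPt g (b l) := hbf.a_lt.le.trans hbf.lt_c.le
  rcases not_and_or.mp (fun h => hu ⟨not_lt.mp h.1, not_lt.mp h.2⟩) with h | h
  all_goals push_neg at h
  · -- u < a
    have hRa : ∀ γ, IsMrca g γ u w ↔ IsMrca g γ u (aPt g (b l)) := by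
      intro γ
      exact (mrca_transfer_right hw.1 h
        (fun t ht => by rw [hbf.ga]; exact hbf.ge_on t ⟨ht.1, ht.2.trans hw.2⟩)
        (hbf.a_not_strict hg)).symm
    constructor
    · rintro ⟨i, ⟨hm, hs⟩ | ⟨hm, -⟩⟩
      · exact ⟨i, Or.inl ⟨(hRa (b i)).mp hm, hs⟩⟩
      · exact absurd hm.1 (not_lt.mpr ((h.trans_le hw.1).le))
    · rintro ⟨i, ⟨hm, hs⟩ | ⟨hm, -⟩⟩
      · exact ⟨i, Or.inl ⟨(hRa (b i)).mpr hm, hs⟩⟩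
      · exact absurd hm.1 (not_lt.mpr h.le)
  · -- c < u
    have hgec : ∀ t ∈ Set.Icc (aPt g (b l)) (cPt g (b l)), g (cPt g (b l)) ≤ g t :=
      fun t ht => by rw [hbf.gc]; exact hbf.ge_on t ht
    have hLa : ∀ γ, IsMrca g γ w u ↔ IsMrca g γ (aPt g (b l)) u := by
      intro γ
      calc IsMrca g γ w u ↔ IsMrca g γ (cPt g (b l)) u := by
            rw [← mrca_transfer_left hw.2 h
              (fun t ht => hgec t ⟨hw.1.trans ht.1, ht.2⟩) (hbf.c_not_strict hg)]
        _ ↔ IsMrca g γ (aPt g (b l)) u := mrca_transfer_left hac h hgec (hbf.c_not_strict hg)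
    constructor
    · rintro ⟨i, ⟨hm, -⟩ | ⟨hm, hs⟩⟩
      · exact absurd hm.1 (not_lt.mpr (hw.2.trans h.le))
      · exact ⟨i, Or.inr ⟨(hLa (b i)).mp hm, hs⟩⟩
    · rintro ⟨i, ⟨hm, -⟩ | ⟨hm, hs⟩⟩
      · exact absurd hm.1 (not_lt.mpr (hac.trans h.le))
      · exact ⟨i, Or.inr ⟨(hLa (b i)).mpr hm, hs⟩⟩

section

variable {g : ℝ → ℝ} {b : ℕ → ℝ} {s : ℕ → Bool} {γ t w u v : ℝ} {l j : ℕ}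

/-- The set whose volume gives `phi`. -/
def TS (g : ℝ → ℝ) (b : ℕ → ℝ) (s : ℕ → Bool) (w : ℝ) : Set ℝ :=
  {u ∈ Set.Icc (0:ℝ) 1 | Tri g b s u w}

lemma ordConnected_mrca_lt : Set.OrdConnected {u : ℝ | IsMrca g γ u t} := by
  constructor
  intro x hx y hy z hz
  obtain ⟨hxt, hxm, hxs, hxmin, hxuniq⟩ := hx
  obtain ⟨hyt, hym, -, -, -⟩ := hy
  exact ⟨lt_of_le_of_lt hz.2 hyt, ⟨lt_of_le_of_lt hz.2 hym.1, hxm.2⟩, hxs,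
    fun t' ht' => hxmin t' ⟨hz.1.trans ht'.1, ht'.2⟩,
    fun t' ht' => hxuniq t' ⟨hz.1.trans ht'.1, ht'.2⟩⟩

lemma ordConnected_mrca_gt : Set.OrdConnected {u : ℝ | IsMrca g γ t u} := by
  constructor
  intro x hx y hy z hz
  obtain ⟨hxt, hxm, hxs, hxmin, hxuniq⟩ := hy
  obtain ⟨hyt, hym, -, -, -⟩ := hx
  exact ⟨lt_of_lt_of_le hyt hz.1, ⟨hxm.1, lt_of_lt_of_le hym.2 hz.1⟩, hxs,
    fun t' ht' => hxmin t' ⟨ht'.1, ht'.2.trans hz.2⟩,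
    fun t' ht' => hxuniq t' ⟨ht'.1, ht'.2.trans hz.2⟩⟩

lemma measurable_triSet : MeasurableSet {u : ℝ | Tri g b s u t} := by
  have heq : {u : ℝ | Tri g b s u t} =
      ⋃ i, ((if s i = true then {u : ℝ | IsMrca g (b i) u t} else ∅) ∪
            (if s i = false then {u : ℝ | IsMrca g (b i) t u} else ∅)) := by
    ext u
    simp only [Set.mem_setOf_eq, Set.mem_iUnion, Set.mem_union, Tri]
    constructor
    · rintro ⟨i, ⟨hm, hs⟩ | ⟨hm, hs⟩⟩
      · exact ⟨i, Or.inl (by rw [if_pos hs]; exact hm)⟩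
      · exact ⟨i, Or.inr (by rw [if_pos hs]; exact hm)⟩
    · rintro ⟨i, h | h⟩
      · by_cases hs : s i = true
        · rw [if_pos hs] at h; exact ⟨i, Or.inl ⟨h, hs⟩⟩
        · rw [if_neg hs] at h; exact absurd h (Set.notMem_empty u)
      · by_cases hs : s i = false
        · rw [if_pos hs] at h; exact ⟨i, Or.inr ⟨h, hs⟩⟩
        · rw [if_neg hs] at h; exact absurd h (Set.notMem_empty u)
  rw [heq]
  refine MeasurableSet.iUnion fun i => MeasurableSet.union ?_ ?_
  · by_cases hs : s i = true
    · rw [if_pos hs]; exact ordConnected_mrca_lt.measurableSet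
    · rw [if_neg hs]; exact MeasurableSet.empty
  · by_cases hs : s i = false
    · rw [if_pos hs]; exact ordConnected_mrca_gt.measurableSet
    · rw [if_neg hs]; exact MeasurableSet.empty

lemma TS_eq : TS g b s w = Set.Icc 0 1 ∩ {u : ℝ | Tri g b s u w} := by
  ext u; exact ⟨fun h => ⟨h.1, h.2⟩, fun h => ⟨h.1, h.2⟩⟩

lemma measurable_TS : MeasurableSet (TS g b s w) := by
  rw [TS_eq]; exact measurableSet_Icc.inter measurable_triSet

lemma vol_TS_ne_top : volume (TS g b s w) ≠ ⊤ := by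
  refine ne_top_of_le_ne_top ?_ (measure_mono (t := Set.Icc (0:ℝ) 1) fun u hu => hu.1)
  simp [Real.volume_Icc]

lemma phi_eq : phi g b s w = (volume (TS g b s w)).toReal := rfl

/-- Main splitting lemma: the volume of the `Tri`-set of a point `w` in the block of `b l`
decomposes as that of `aPt (b l)` plus the part inside the open block. -/
lemma vol_TS_split (hg : IsCRT g) (hbf : BF g (b l))
    (hw : w ∈ Set.Icc (aPt g (b l)) (cPt g (b l))) :
    volume (TS g b s w) =
      volume (TS g b s (aPt g (b l))) +
      volume (TS g b s w ∩ Set.Ioo (aPt g (b l)) (cPt g (b l))) := by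
  set a := aPt g (b l)
  set c := cPt g (b l)
  have hIm : MeasurableSet (Set.Ioo a c) := measurableSet_Ioo
  have h1 : volume (TS g b s w) =
      volume (TS g b s w ∩ Set.Ioo a c) + volume (TS g b s w \ Set.Ioo a c) :=
    (measure_inter_add_diff _ hIm).symm
  have h2 : volume (TS g b s w \ Set.Ioo a c) = volume (TS g b s (aPt g (b l))) := by
    have hnull : volume ({a, c} : Set ℝ) = 0 :=
      ((Set.finite_singleton c).insert a).measure_zero _
    have hd1 : (TS g b s w \ Set.Ioo a c) \ TS g b s a ⊆ ({a, c} : Set ℝ) := by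
      rintro u ⟨⟨hu1, hu2⟩, hu3⟩
      by_contra hmem
      obtain ⟨hu01, htri⟩ := hu1
      have hout : u ∉ Set.Icc a c := by
        intro hin
        rcases eq_or_lt_of_le hin.1 with h | h
        · exact hmem (Or.inl h.symm)
        rcases eq_or_lt_of_le hin.2 with h' | h'
        · exact hmem (Or.inr (by simp [h']))
        · exact hu2 ⟨h, h'⟩
      exact hu3 ⟨hu01, (tri_congr_outside hg hbf hw hout).mp htri⟩
    have hd2 : TS g b s a \ (TS g b s w \ Set.Ioo a c) ⊆ ({a, c} : Set ℝ) := by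
      rintro u ⟨⟨hu01, htri⟩, hu2⟩
      by_contra hmem
      have hnotin : u ∉ Set.Ioo a c := fun hin => not_tri_inside hbf hin htri
      have hout : u ∉ Set.Icc a c := by
        intro hin
        rcases eq_or_lt_of_le hin.1 with h | h
        · exact hmem (Or.inl h.symm)
        rcases eq_or_lt_of_le hin.2 with h' | h'
        · exact hmem (Or.inr (by simp [h']))
        · exact hnotin ⟨h, h'⟩
      exact hu2 ⟨⟨hu01, (tri_congr_outside hg hbf hw hout).mpr htri⟩, hnotin⟩
    exact measure_congr (MeasureTheory.ae_eq_set.mpr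
      ⟨measure_mono_null hd1 hnull, measure_mono_null hd2 hnull⟩)
  rw [h1, h2, add_comm]

section
variable {g : ℝ → ℝ} {b : ℕ → ℝ} {s : ℕ → Bool} {u w : ℝ} {l j : ℕ}

lemma bf_enum (hg : IsCRT g) (hb : IsEnum g b) (l : ℕ) : BF g (b l) :=
  bf_of_strict hg ((hb.2 (b l)).mpr ⟨l, rfl⟩)

lemma height_ne (hg : IsCRT g) (hb : IsEnum g b) (hlj : l ≠ j) : g (b l) ≠ g (b j) :=
  fun h => hlj (hb.1 (strict_eq hg (bf_enum hg hb l).strict (bf_enum hg hb j).strict h))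

/-- Facts about a strict descendant block. -/
lemma desc_facts (hg : IsCRT g) (hb : IsEnum g b) (hlj : l ≠ j)
    (hdesc : Set.Icc (aPt g (b j)) (cPt g (b j)) ⊆ Set.Icc (aPt g (b l)) (cPt g (b l))) :
    aPt g (b l) < aPt g (b j) ∧ cPt g (b j) < cPt g (b l) ∧ g (b l) < g (b j) ∧
      (b l < aPt g (b j) ∨ cPt g (b j) < b l) := by
  have hbl := bf_enum hg hb l
  have hbj := bf_enum hg hb j
  have hjmem : Set.Icc (aPt g (b j)) (cPt g (b j)) ⊆ Set.Icc (aPt g (b l)) (cPt g (b l)) := hdesc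
  have hajcj : aPt g (b j) ≤ cPt g (b j) := hbj.a_lt.le.trans hbj.lt_c.le
  have haj : aPt g (b j) ∈ Set.Icc (aPt g (b l)) (cPt g (b l)) := hjmem ⟨le_rfl, hajcj⟩
  have hcj : cPt g (b j) ∈ Set.Icc (aPt g (b l)) (cPt g (b l)) := hjmem ⟨hajcj, le_rfl⟩
  have hhne : g (b l) ≠ g (b j) := height_ne hg hb hlj
  have hane : aPt g (b l) ≠ aPt g (b j) := by
    intro h
    apply hhne
    rw [← hbl.ga, h, hbj.ga]
  have hcne : cPt g (b j) ≠ cPt g (b l) := by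
    intro h
    apply hhne
    rw [← hbl.gc, ← h, hbj.gc]
  have ha : aPt g (b l) < aPt g (b j) := lt_of_le_of_ne haj.1 hane
  have hc : cPt g (b j) < cPt g (b l) := lt_of_le_of_ne hcj.2 hcne
  have hbj_mem : b j ∈ Set.Ioo (aPt g (b l)) (cPt g (b l)) := by
    have h1 : b j ∈ Set.Icc (aPt g (b l)) (cPt g (b l)) :=
      hjmem ⟨hbj.a_lt.le, hbj.lt_c.le⟩
    constructor
    · rcases eq_or_lt_of_le h1.1 with h | h
      · exact absurd (by rw [← h, hbl.ga]) (Ne.symm hhne)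
      · exact h
    · rcases eq_or_lt_of_le h1.2 with h | h
      · exact absurd (by rw [h, hbl.gc]) (Ne.symm hhne)
      · exact h
  have hbb : b j ≠ b l := fun h => hlj (hb.1 h).symm
  have hlt : g (b l) < g (b j) := hbl.gt_on (b j) hbj_mem hbb
  refine ⟨ha, hc, hlt, ?_⟩
  by_contra hcon
  push_neg at hcon
  have hblm : b l ∈ Set.Icc (aPt g (b j)) (cPt g (b j)) := ⟨hcon.1, hcon.2⟩
  have hbl_mem : b l ∈ Set.Ioo (aPt g (b j)) (cPt g (b j)) := by
    constructor
    · rcases eq_or_lt_of_le hblm.1 with h | h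
      · exact absurd (by rw [← h, hbj.ga]) hhne
      · exact h
    · rcases eq_or_lt_of_le hblm.2 with h | h
      · exact absurd (by rw [h, hbj.gc]) hhne
      · exact h
  exact absurd (hbj.gt_on (b l) hbl_mem (fun h => hlj (hb.1 h))) (not_lt.mpr hlt.le)

/-- If `j` lies right of `b l`, points of `(a_l, b_l)` have mrca `b l` with `a_j`. -/
lemma mrca_right_in (hg : IsCRT g) (hb : IsEnum g b) (hlj : l ≠ j)
    (hdesc : Set.Icc (aPt g (b j)) (cPt g (b j)) ⊆ Set.Icc (aPt g (b l)) (cPt g (b l)))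
    (hr : b l < aPt g (b j)) (hu : u ∈ Set.Ioo (aPt g (b l)) (b l)) :
    IsMrca g (b l) u (aPt g (b j)) := by
  have hbl := bf_enum hg hb l
  have hbj := bf_enum hg hb j
  obtain ⟨ha, hc, -, -⟩ := desc_facts hg hb hlj hdesc
  have hajc : aPt g (b j) < cPt g (b l) := lt_of_le_of_lt (hbj.a_lt.le.trans hbj.lt_c.le) hc
  refine ⟨hu.2.trans hr, ⟨hu.2, hr⟩, hbl.strict, ?_, ?_⟩
  · intro t ht
    have htm : t ∈ Set.Ioo (aPt g (b l)) (cPt g (b l)) :=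
      ⟨hu.1.trans_le ht.1, lt_of_le_of_lt ht.2 hajc⟩
    rcases eq_or_ne t (b l) with rfl | hne
    · exact le_rfl
    · exact (hbl.gt_on t htm hne).le
  · intro t ht heq
    have htm : t ∈ Set.Ioo (aPt g (b l)) (cPt g (b l)) :=
      ⟨hu.1.trans_le ht.1, lt_of_le_of_lt ht.2 hajc⟩
    by_contra hne
    exact absurd heq (ne_of_gt (hbl.gt_on t htm hne))

/-- If `j` lies left of `b l`, points of `(b_l, c_l)` have mrca `b l` with `a_j` (reversed). -/
lemma mrca_left_in (hg : IsCRT g) (hb : IsEnum g b) (hlj : l ≠ j)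
    (hdesc : Set.Icc (aPt g (b j)) (cPt g (b j)) ⊆ Set.Icc (aPt g (b l)) (cPt g (b l)))
    (hl : cPt g (b j) < b l) (hu : u ∈ Set.Ioo (b l) (cPt g (b l))) :
    IsMrca g (b l) (aPt g (b j)) u := by
  have hbl := bf_enum hg hb l
  have hbj := bf_enum hg hb j
  obtain ⟨ha, hc, -, -⟩ := desc_facts hg hb hlj hdesc
  have hajb : aPt g (b j) < b l := lt_of_le_of_lt (hbj.a_lt.le.trans hbj.lt_c.le) hl
  refine ⟨hajb.trans hu.1, ⟨hajb, hu.1⟩, hbl.strict, ?_, ?_⟩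
  · intro t ht
    have htm : t ∈ Set.Ioo (aPt g (b l)) (cPt g (b l)) :=
      ⟨ha.trans_le ht.1, lt_of_le_of_lt ht.2 hu.2⟩
    rcases eq_or_ne t (b l) with rfl | hne
    · exact le_rfl
    · exact (hbl.gt_on t htm hne).le
  · intro t ht heq
    have htm : t ∈ Set.Ioo (aPt g (b l)) (cPt g (b l)) :=
      ⟨ha.trans_le ht.1, lt_of_le_of_lt ht.2 hu.2⟩
    by_contra hne
    exact absurd heq (ne_of_gt (hbl.gt_on t htm hne))

lemma tri_right_iff (hg : IsCRT g) (hb : IsEnum g b) (hlj : l ≠ j)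
    (hdesc : Set.Icc (aPt g (b j)) (cPt g (b j)) ⊆ Set.Icc (aPt g (b l)) (cPt g (b l)))
    (hr : b l < aPt g (b j)) (hu : u ∈ Set.Ioo (aPt g (b l)) (b l)) :
    Tri g b s u (aPt g (b j)) ↔ s l = true := by
  constructor
  · rintro ⟨i, ⟨hm, hs⟩ | ⟨hm, hs⟩⟩
    · have : b i = b l := hm.uniquePt (mrca_right_in hg hb hlj hdesc hr hu)
      rwa [hb.1 this] at hs
    · exact absurd hm.1 (not_lt.mpr (hu.2.trans hr).le)
  · intro hs
    exact ⟨l, Or.inl ⟨mrca_right_in hg hb hlj hdesc hr hu, hs⟩⟩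

lemma tri_left_iff (hg : IsCRT g) (hb : IsEnum g b) (hlj : l ≠ j)
    (hdesc : Set.Icc (aPt g (b j)) (cPt g (b j)) ⊆ Set.Icc (aPt g (b l)) (cPt g (b l)))
    (hl : cPt g (b j) < b l) (hu : u ∈ Set.Ioo (b l) (cPt g (b l))) :
    Tri g b s u (aPt g (b j)) ↔ s l = false := by
  have hajb : aPt g (b j) < b l :=
    lt_of_le_of_lt ((bf_enum hg hb j).a_lt.le.trans (bf_enum hg hb j).lt_c.le) hl
  constructor
  · rintro ⟨i, ⟨hm, hs⟩ | ⟨hm, hs⟩⟩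
    · exact absurd hm.1 (not_lt.mpr (hajb.trans hu.1).le)
    · have : b i = b l := hm.uniquePt (mrca_left_in hg hb hlj hdesc hl hu)
      rwa [hb.1 this] at hs
  · intro hs
    exact ⟨l, Or.inr ⟨mrca_left_in hg hb hlj hdesc hl hu, hs⟩⟩

section
variable {g : ℝ → ℝ} {b : ℕ → ℝ} {s : ℕ → Bool} {u w : ℝ} {l j : ℕ}

lemma vol_add3_le {A B C D : Set ℝ} (mB : MeasurableSet B) (mC : MeasurableSet C)
    (hAB : Disjoint A B) (hAC : Disjoint A C) (hBC : Disjoint B C)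
    (hsub : A ∪ B ∪ C ⊆ D) : volume A + volume B + volume C ≤ volume D := by
  rw [← measure_union hAB mB, ← measure_union (Set.disjoint_union_left.mpr ⟨hAC, hBC⟩) mC]
  exact measure_mono hsub

lemma toReal_vol_Ioo {x y : ℝ} (h : x ≤ y) : (volume (Set.Ioo x y)).toReal = y - x := by
  rw [Real.volume_Ioo, ENNReal.toReal_ofReal (by linarith)]

lemma vol_mid_ne_top {I : Set ℝ} : volume (TS g b s w ∩ I) ≠ ⊤ :=
  ne_top_of_le_ne_top vol_TS_ne_top (measure_mono Set.inter_subset_left)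

lemma phi_desc_split (hg : IsCRT g) (hb : IsEnum g b)
    (hdesc : Set.Icc (aPt g (b j)) (cPt g (b j)) ⊆ Set.Icc (aPt g (b l)) (cPt g (b l))) :
    phi g b s (aPt g (b j)) = phi g b s (aPt g (b l)) +
      (volume (TS g b s (aPt g (b j)) ∩
        Set.Ioo (aPt g (b l)) (cPt g (b l)))).toReal := by
  have hbj := bf_enum hg hb j
  have hw : aPt g (b j) ∈ Set.Icc (aPt g (b l)) (cPt g (b l)) :=
    hdesc ⟨le_rfl, hbj.a_lt.le.trans hbj.lt_c.le⟩
  rw [phi_eq, phi_eq, vol_TS_split hg (bf_enum hg hb l) hw,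
    ENNReal.toReal_add vol_TS_ne_top vol_mid_ne_top]

lemma phi_mono_desc (hg : IsCRT g) (hb : IsEnum g b)
    (hdesc : Set.Icc (aPt g (b j)) (cPt g (b j)) ⊆ Set.Icc (aPt g (b l)) (cPt g (b l))) :
    phi g b s (aPt g (b l)) ≤ phi g b s (aPt g (b j)) := by
  rw [phi_desc_split hg hb hdesc]
  exact le_add_of_nonneg_right ENNReal.toReal_nonneg

lemma phi_len_desc (hg : IsCRT g) (hb : IsEnum g b) (hlj : l ≠ j)
    (hdesc : Set.Icc (aPt g (b j)) (cPt g (b j)) ⊆ Set.Icc (aPt g (b l)) (cPt g (b l))) :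
    phi g b s (aPt g (b j)) + (cPt g (b j) - aPt g (b j)) ≤
      phi g b s (aPt g (b l)) + (cPt g (b l) - aPt g (b l)) := by
  have hbl := bf_enum hg hb l
  have hbj := bf_enum hg hb j
  obtain ⟨ha, hc, -, -⟩ := desc_facts hg hb hlj hdesc
  set M := TS g b s (aPt g (b j)) ∩ Set.Ioo (aPt g (b l)) (cPt g (b l)) with hM
  have hdisj : Disjoint M (Set.Ioo (aPt g (b j)) (cPt g (b j))) := by
    rw [Set.disjoint_left]
    rintro x ⟨hx1, -⟩ hx2
    exact not_tri_inside hbj hx2 hx1.2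
  have hsub : M ∪ Set.Ioo (aPt g (b j)) (cPt g (b j)) ⊆
      Set.Ioo (aPt g (b l)) (cPt g (b l)) := by
    rintro x (hx | hx)
    · exact hx.2
    · exact ⟨ha.trans hx.1, hx.2.trans hc⟩
  have hE : volume M + volume (Set.Ioo (aPt g (b j)) (cPt g (b j))) ≤
      volume (Set.Ioo (aPt g (b l)) (cPt g (b l))) := by
    rw [← measure_union hdisj measurableSet_Ioo]
    exact measure_mono hsub
  have hR : (volume M).toReal + (cPt g (b j) - aPt g (b j)) ≤
      cPt g (b l) - aPt g (b l) := by
    have := ENNReal.toReal_mono (by simp [Real.volume_Ioo]) hE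
    rwa [ENNReal.toReal_add vol_mid_ne_top (by simp [Real.volume_Ioo]),
      toReal_vol_Ioo (hbj.a_lt.le.trans hbj.lt_c.le),
      toReal_vol_Ioo (hbl.a_lt.le.trans hbl.lt_c.le)] at this
  rw [phi_desc_split hg hb hdesc]
  linarith

lemma phi_right_true (hg : IsCRT g) (hb : IsEnum g b) (hlj : l ≠ j)
    (hdesc : Set.Icc (aPt g (b j)) (cPt g (b j)) ⊆ Set.Icc (aPt g (b l)) (cPt g (b l)))
    (hr : b l < aPt g (b j)) (hs : s l = true) :
    phi g b s (aPt g (b l)) + (b l - aPt g (b l)) ≤ phi g b s (aPt g (b j)) := by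
  have hbl := bf_enum hg hb l
  set M := TS g b s (aPt g (b j)) ∩ Set.Ioo (aPt g (b l)) (cPt g (b l)) with hM
  have hsub : Set.Ioo (aPt g (b l)) (b l) ⊆ M := by
    intro x hx
    refine ⟨⟨⟨(hbl.a_pos.trans hx.1).le, (hx.2.trans (hbl.lt_c.trans hbl.c_lt)).le⟩, ?_⟩,
      ⟨hx.1, hx.2.trans hbl.lt_c⟩⟩
    exact (tri_right_iff hg hb hlj hdesc hr hx).mpr hs
  have hE : volume (Set.Ioo (aPt g (b l)) (b l)) ≤ volume M := measure_mono hsub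
  have hR : b l - aPt g (b l) ≤ (volume M).toReal := by
    have := ENNReal.toReal_mono vol_mid_ne_top hE
    rwa [toReal_vol_Ioo hbl.a_lt.le] at this
  rw [phi_desc_split hg hb hdesc]
  linarith

lemma phi_left_false (hg : IsCRT g) (hb : IsEnum g b) (hlj : l ≠ j)
    (hdesc : Set.Icc (aPt g (b j)) (cPt g (b j)) ⊆ Set.Icc (aPt g (b l)) (cPt g (b l)))
    (hl : cPt g (b j) < b l) (hs : s l = false) :
    phi g b s (aPt g (b l)) + (cPt g (b l) - b l) ≤ phi g b s (aPt g (b j)) := by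
  have hbl := bf_enum hg hb l
  set M := TS g b s (aPt g (b j)) ∩ Set.Ioo (aPt g (b l)) (cPt g (b l)) with hM
  have hsub : Set.Ioo (b l) (cPt g (b l)) ⊆ M := by
    intro x hx
    refine ⟨⟨⟨((hbl.a_pos.trans hbl.a_lt).trans hx.1).le, (hx.2.trans hbl.c_lt).le⟩, ?_⟩,
      ⟨hbl.a_lt.trans hx.1, hx.2⟩⟩
    exact (tri_left_iff hg hb hlj hdesc hl hx).mpr hs
  have hE : volume (Set.Ioo (b l) (cPt g (b l))) ≤ volume M := measure_mono hsub
  have hR : cPt g (b l) - b l ≤ (volume M).toReal := by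
    have := ENNReal.toReal_mono vol_mid_ne_top hE
    rwa [toReal_vol_Ioo hbl.lt_c.le] at this
  rw [phi_desc_split hg hb hdesc]
  linarith

lemma phi_right_false (hg : IsCRT g) (hb : IsEnum g b) (hlj : l ≠ j)
    (hdesc : Set.Icc (aPt g (b j)) (cPt g (b j)) ⊆ Set.Icc (aPt g (b l)) (cPt g (b l)))
    (hr : b l < aPt g (b j)) (hs : s l = false) :
    phi g b s (aPt g (b j)) + (cPt g (b j) - aPt g (b j)) ≤
      phi g b s (aPt g (b l)) + (cPt g (b l) - b l) := by
  have hbl := bf_enum hg hb l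
  have hbj := bf_enum hg hb j
  obtain ⟨ha, hc, -, -⟩ := desc_facts hg hb hlj hdesc
  set M := TS g b s (aPt g (b j)) ∩ Set.Ioo (aPt g (b l)) (cPt g (b l)) with hM
  have hd1 : Disjoint M (Set.Ioo (aPt g (b l)) (b l)) := by
    rw [Set.disjoint_left]
    rintro x ⟨hx1, -⟩ hx2
    exact absurd ((tri_right_iff hg hb hlj hdesc hr hx2).mp hx1.2) (by simp [hs])
  have hd2 : Disjoint M (Set.Ioo (aPt g (b j)) (cPt g (b j))) := by
    rw [Set.disjoint_left]
    rintro x ⟨hx1, -⟩ hx2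
    exact not_tri_inside hbj hx2 hx1.2
  have hd3 : Disjoint (Set.Ioo (aPt g (b l)) (b l)) (Set.Ioo (aPt g (b j)) (cPt g (b j))) := by
    rw [Set.disjoint_left]
    intro x hx1 hx2
    linarith [hx1.2, hx2.1]
  have hsub : M ∪ Set.Ioo (aPt g (b l)) (b l) ∪ Set.Ioo (aPt g (b j)) (cPt g (b j)) ⊆
      Set.Ioo (aPt g (b l)) (cPt g (b l)) := by
    rintro x ((hx | hx) | hx)
    · exact hx.2
    · exact ⟨hx.1, hx.2.trans hbl.lt_c⟩
    · exact ⟨ha.trans hx.1, hx.2.trans hc⟩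
  have hE := vol_add3_le measurableSet_Ioo measurableSet_Ioo hd1 hd2 hd3 hsub
  have hR : (volume M).toReal + (b l - aPt g (b l)) + (cPt g (b j) - aPt g (b j)) ≤
      cPt g (b l) - aPt g (b l) := by
    have := ENNReal.toReal_mono (by simp [Real.volume_Ioo]) hE
    rwa [ENNReal.toReal_add
        (ENNReal.add_ne_top.mpr ⟨vol_mid_ne_top, by simp [Real.volume_Ioo]⟩)
        (by simp [Real.volume_Ioo]),
      ENNReal.toReal_add vol_mid_ne_top (by simp [Real.volume_Ioo]),
      toReal_vol_Ioo hbl.a_lt.le, toReal_vol_Ioo (hbj.a_lt.le.trans hbj.lt_c.le),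
      toReal_vol_Ioo (hbl.a_lt.le.trans hbl.lt_c.le)] at this
  rw [phi_desc_split hg hb hdesc]
  linarith

lemma phi_left_true (hg : IsCRT g) (hb : IsEnum g b) (hlj : l ≠ j)
    (hdesc : Set.Icc (aPt g (b j)) (cPt g (b j)) ⊆ Set.Icc (aPt g (b l)) (cPt g (b l)))
    (hl : cPt g (b j) < b l) (hs : s l = true) :
    phi g b s (aPt g (b j)) + (cPt g (b j) - aPt g (b j)) ≤
      phi g b s (aPt g (b l)) + (b l - aPt g (b l)) := by
  have hbl := bf_enum hg hb l
  have hbj := bf_enum hg hb j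
  obtain ⟨ha, hc, -, -⟩ := desc_facts hg hb hlj hdesc
  set M := TS g b s (aPt g (b j)) ∩ Set.Ioo (aPt g (b l)) (cPt g (b l)) with hM
  have hd1 : Disjoint M (Set.Ioo (b l) (cPt g (b l))) := by
    rw [Set.disjoint_left]
    rintro x ⟨hx1, -⟩ hx2
    exact absurd ((tri_left_iff hg hb hlj hdesc hl hx2).mp hx1.2) (by simp [hs])
  have hd2 : Disjoint M (Set.Ioo (aPt g (b j)) (cPt g (b j))) := by
    rw [Set.disjoint_left]
    rintro x ⟨hx1, -⟩ hx2
    exact not_tri_inside hbj hx2 hx1.2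
  have hd3 : Disjoint (Set.Ioo (b l) (cPt g (b l))) (Set.Ioo (aPt g (b j)) (cPt g (b j))) := by
    rw [Set.disjoint_left]
    intro x hx1 hx2
    linarith [hx1.1, hx2.2]
  have hsub : M ∪ Set.Ioo (b l) (cPt g (b l)) ∪ Set.Ioo (aPt g (b j)) (cPt g (b j)) ⊆
      Set.Ioo (aPt g (b l)) (cPt g (b l)) := by
    rintro x ((hx | hx) | hx)
    · exact hx.2
    · exact ⟨hbl.a_lt.trans hx.1, hx.2⟩
    · exact ⟨ha.trans hx.1, hx.2.trans hc⟩
  have hE := vol_add3_le measurableSet_Ioo measurableSet_Ioo hd1 hd2 hd3 hsub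
  have hR : (volume M).toReal + (cPt g (b l) - b l) + (cPt g (b j) - aPt g (b j)) ≤
      cPt g (b l) - aPt g (b l) := by
    have := ENNReal.toReal_mono (by simp [Real.volume_Ioo]) hE
    rwa [ENNReal.toReal_add
        (ENNReal.add_ne_top.mpr ⟨vol_mid_ne_top, by simp [Real.volume_Ioo]⟩)
        (by simp [Real.volume_Ioo]),
      ENNReal.toReal_add vol_mid_ne_top (by simp [Real.volume_Ioo]),
      toReal_vol_Ioo hbl.lt_c.le, toReal_vol_Ioo (hbj.a_lt.le.trans hbj.lt_c.le),
      toReal_vol_Ioo (hbl.a_lt.le.trans hbl.lt_c.le)] at this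
  rw [phi_desc_split hg hb hdesc]
  linarith

section
variable {g : ℝ → ℝ} {b : ℕ → ℝ} {s : ℕ → Bool} {β u w T : ℝ} {l m : ℕ}

lemma pt_near_left (hβ : IsStrictLocalMin g β) (hT : T < β) :
    ∃ p, T < p ∧ p < β ∧ g β < g p := by
  obtain ⟨-, ε, hε, hlt⟩ := hβ
  refine ⟨β - min (ε/2) ((β - T)/2), by
      have := min_le_right (ε/2) ((β - T)/2); linarith, by
      have := lt_min (half_pos hε) (by linarith : (0:ℝ) < (β - T)/2); linarith, ?_⟩
  refine hlt _ ⟨?_, ?_⟩ ?_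
  · have := min_le_left (ε/2) ((β - T)/2); linarith
  · have := lt_min (half_pos hε) (by linarith : (0:ℝ) < (β - T)/2); linarith
  · have := lt_min (half_pos hε) (by linarith : (0:ℝ) < (β - T)/2); intro hc; linarith

lemma pt_near_right (hβ : IsStrictLocalMin g β) (hT : β < T) :
    ∃ p, p < T ∧ β < p ∧ g β < g p := by
  obtain ⟨-, ε, hε, hlt⟩ := hβ
  refine ⟨β + min (ε/2) ((T - β)/2), by
      have := min_le_right (ε/2) ((T - β)/2); linarith, by
      have := lt_min (half_pos hε) (by linarith : (0:ℝ) < (T - β)/2); linarith, ?_⟩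
  refine hlt _ ⟨?_, ?_⟩ ?_
  · have := lt_min (half_pos hε) (by linarith : (0:ℝ) < (T - β)/2); linarith
  · have := min_le_left (ε/2) ((T - β)/2); linarith
  · have := lt_min (half_pos hε) (by linarith : (0:ℝ) < (T - β)/2); intro hc; linarith

/-- If `b m` lies strictly inside the block of `b l`, the block of `b m` is nested in it. -/
lemma nested_of_bmem (hg : IsCRT g) (hb : IsEnum g b) (hlm : l ≠ m)
    (hmem : b m ∈ Set.Ioo (aPt g (b l)) (cPt g (b l))) :
    Set.Icc (aPt g (b m)) (cPt g (b m)) ⊆ Set.Icc (aPt g (b l)) (cPt g (b l)) := by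
  have hbl := bf_enum hg hb l
  have hbm := bf_enum hg hb m
  have hne : b m ≠ b l := fun h => hlm (hb.1 h).symm
  have hmgt : g (b l) < g (b m) := hbl.gt_on _ hmem hne
  -- left endpoint
  have hL : ∃ L, aPt g (b l) ≤ L ∧ L < b m ∧ g L = g (b l) := by
    rcases lt_or_gt_of_ne hne with h | h
    · exact ⟨aPt g (b l), le_rfl, hmem.1, hbl.ga⟩
    · exact ⟨b l, hbl.a_lt.le, h, rfl⟩
  obtain ⟨L, hL1, hL2, hL3⟩ := hL
  have hR : ∃ R, R ≤ cPt g (b l) ∧ b m < R ∧ g R = g (b l) := by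
    rcases lt_or_gt_of_ne hne with h | h
    · exact ⟨b l, hbl.lt_c.le, h, rfl⟩
    · exact ⟨cPt g (b l), le_rfl, hmem.2, hbl.gc⟩
  obtain ⟨R, hR1, hR2, hR3⟩ := hR
  have hL0 : 0 < L := lt_of_lt_of_le hbl.a_pos hL1
  have hR1' : R < 1 := lt_of_le_of_lt hR1 hbl.c_lt
  -- find a point with value g (b m) in (L, b m)
  obtain ⟨p, hp1, hp2, hp3⟩ := pt_near_left hbm.strict hL2
  have hivt := intermediate_value_Icc hp1.le (isCRT_contOn hg hL0.le (by linarith))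
  obtain ⟨w, hw1, hw2⟩ := hivt (by rw [hL3]; exact ⟨hmgt.le, hp3.le⟩ :
    g (b m) ∈ Set.Icc (g L) (g p))
  have hwL : w ≠ L := fun h => by rw [h, hL3] at hw2; exact absurd hw2.symm (ne_of_gt hmgt)
  have haw : w ≤ aPt g (b m) :=
    le_csSup ⟨b m, fun t ht => ht.1.le⟩ ⟨by linarith [hw1.2], hw2⟩
  -- find a point with value g (b m) in (b m, R)
  obtain ⟨q, hq1, hq2, hq3⟩ := pt_near_right hbm.strict hR2
  have hivt' := intermediate_value_Icc' hq1.le (isCRT_contOn hg (by linarith [hbm.a_pos.trans hbm.a_lt]; ) hR1'.le)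
  obtain ⟨w', hw'1, hw'2⟩ := hivt' (by rw [hR3]; exact ⟨hmgt.le, hq3.le⟩ :
    g (b m) ∈ Set.Icc (g R) (g q))
  have hw'R : w' ≠ R := fun h => by rw [h, hR3] at hw'2; exact absurd hw'2.symm (ne_of_gt hmgt)
  have hcw : cPt g (b m) ≤ w' :=
    csInf_le ⟨b m, fun t ht => ht.1.le⟩ ⟨by linarith [hw'1.1], hw'2⟩
  intro x hx
  constructor
  · exact (calc aPt g (b l) ≤ L := hL1
      _ < w := lt_of_le_of_ne hw1.1 (Ne.symm hwL)
      _ ≤ aPt g (b m) := haw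
      _ ≤ x := hx.1).le
  · exact (calc x ≤ cPt g (b m) := hx.2
      _ ≤ w' := hcw
      _ < R := lt_of_le_of_ne hw'1.2 hw'R
      _ ≤ cPt g (b l) := hR1).le

/-- Two blocks whose minima are mutually outside each other's blocks are disjoint. -/
lemma disj_of_outside (hg : IsCRT g) (hb : IsEnum g b) (hlm : l ≠ m)
    (horder : b l < b m)
    (hm_out : b m ∉ Set.Icc (aPt g (b l)) (cPt g (b l)))
    (hl_out : b l ∉ Set.Icc (aPt g (b m)) (cPt g (b m))) :
    cPt g (b l) < aPt g (b m) := by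
  have hbl := bf_enum hg hb l
  have hbm := bf_enum hg hb m
  have hbmcl : cPt g (b l) < b m := by
    by_contra h
    push_neg at h
    exact hm_out ⟨(hbl.a_lt.trans horder).le, h⟩
  have hblam : b l < aPt g (b m) := by
    by_contra h
    push_neg at h
    exact hl_out ⟨h, (horder.trans hbm.lt_c).le⟩
  by_contra hcon
  push_neg at hcon  -- aPt (b m) ≤ cPt (b l)
  have hane : aPt g (b m) ≠ cPt g (b l) := by
    intro h
    have : g (b l) = g (b m) := by rw [← hbl.gc, ← h, hbm.ga]
    exact height_ne hg hb hlm this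
  have ham : aPt g (b m) ∈ Set.Ioo (b l) (cPt g (b l)) :=
    ⟨hblam, lt_of_le_of_ne hcon hane⟩
  have hgt : g (b l) < g (b m) := by
    have := hbl.gt_on (aPt g (b m)) ⟨hbl.a_lt.trans ham.1, ham.2⟩ (ne_of_gt ham.1)
    rwa [hbm.ga] at this
  -- find a point with value g (b m) in (cPt (b l), b m): contradicts sSup
  obtain ⟨p, hp1, hp2, hp3⟩ := pt_near_left hbm.strict hbmcl
  have hivt := intermediate_value_Icc hp1.le
    (isCRT_contOn hg (hbl.a_pos.trans (hbl.a_lt.trans hbl.lt_c)).le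
      (by linarith [hbm.lt_c, hbm.c_lt]))
  obtain ⟨w, hw1, hw2⟩ := hivt (by rw [hbl.gc]; exact ⟨hgt.le, hp3.le⟩ :
    g (b m) ∈ Set.Icc (g (cPt g (b l))) (g p))
  have hwc : w ≠ cPt g (b l) := fun h => by
    rw [h, hbl.gc] at hw2; exact absurd hw2.symm (ne_of_gt hgt)
  have haw : w ≤ aPt g (b m) :=
    le_csSup ⟨b m, fun t ht => ht.1.le⟩ ⟨by linarith [hw1.2], hw2⟩
  have : cPt g (b l) < w := lt_of_le_of_ne hw1.1 (Ne.symm hwc)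
  linarith

lemma laminar (hg : IsCRT g) (hb : IsEnum g b) (hlm : l ≠ m) :
    Set.Icc (aPt g (b m)) (cPt g (b m)) ⊆ Set.Icc (aPt g (b l)) (cPt g (b l)) ∨
    Set.Icc (aPt g (b l)) (cPt g (b l)) ⊆ Set.Icc (aPt g (b m)) (cPt g (b m)) ∨
    cPt g (b l) < aPt g (b m) ∨ cPt g (b m) < aPt g (b l) := by
  have hbl := bf_enum hg hb l
  have hbm := bf_enum hg hb m
  have hne : b l ≠ b m := fun h => hlm (hb.1 h)
  by_cases h1 : b m ∈ Set.Ioo (aPt g (b l)) (cPt g (b l))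
  · exact Or.inl (nested_of_bmem hg hb hlm h1)
  by_cases h2 : b l ∈ Set.Ioo (aPt g (b m)) (cPt g (b m))
  · exact Or.inr (Or.inl (nested_of_bmem hg hb (Ne.symm hlm) h2))
  -- mutually outside: first upgrade Ioo-out to Icc-out
  have hm_out : b m ∉ Set.Icc (aPt g (b l)) (cPt g (b l)) := by
    intro h
    rcases eq_or_lt_of_le h.1 with he | hlt
    · exact height_ne hg hb hlm (by rw [← hbl.ga, he])
    rcases eq_or_lt_of_le h.2 with he | hlt'
    · exact height_ne hg hb hlm (by rw [← hbl.gc, ← he])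
    · exact h1 ⟨hlt, hlt'⟩
  have hl_out : b l ∉ Set.Icc (aPt g (b m)) (cPt g (b m)) := by
    intro h
    rcases eq_or_lt_of_le h.1 with he | hlt
    · exact height_ne hg hb (Ne.symm hlm) (by rw [← hbm.ga, he])
    rcases eq_or_lt_of_le h.2 with he | hlt'
    · exact height_ne hg hb (Ne.symm hlm) (by rw [← hbm.gc, ← he])
    · exact h2 ⟨hlt, hlt'⟩
  rcases lt_or_gt_of_ne hne with h | h
  · exact Or.inr (Or.inr (Or.inl (disj_of_outside hg hb hlm h hm_out hl_out)))
  · exact Or.inr (Or.inr (Or.inr (disj_of_outside hg hb (Ne.symm hlm) h hl_out hm_out)))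

section
variable {g : ℝ → ℝ} {b : ℕ → ℝ} {s : ℕ → Bool} {l m : ℕ}

lemma gap_mrca (hg : IsCRT g) (hb : IsEnum g b) (hlm : l ≠ m)
    (hdisj : cPt g (b l) < aPt g (b m)) :
    ∃ k, b k ∈ Set.Ioo (cPt g (b l)) (aPt g (b m)) ∧
      Set.Icc (aPt g (b l)) (cPt g (b l)) ⊆ Set.Icc (aPt g (b k)) (cPt g (b k)) ∧
      Set.Icc (aPt g (b m)) (cPt g (b m)) ⊆ Set.Icc (aPt g (b k)) (cPt g (b k)) ∧
      k ≠ l ∧ k ≠ m := by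
  have hbl := bf_enum hg hb l
  have hbm := bf_enum hg hb m
  set cl := cPt g (b l) with hcldef
  set am := aPt g (b m) with hamdef
  have hcl0 : 0 < cl := hbl.a_pos.trans (hbl.a_lt.trans hbl.lt_c)
  have hcl1 : cl < 1 := hbl.c_lt
  have ham0 : 0 < am := hcl0.trans hdisj
  have ham1 : am < 1 := (hbm.a_lt.trans hbm.lt_c).trans hbm.c_lt
  obtain ⟨t₀, ht₀mem, ht₀min'⟩ := isCompact_Icc.exists_isMinOn
    (Set.nonempty_Icc.mpr hdisj.le) (isCRT_contOn hg hcl0.le ham1.le)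
  have ht₀min : ∀ t ∈ Set.Icc cl am, g t₀ ≤ g t := fun t ht => ht₀min' ht
  have hvl : g t₀ < g (b l) := by
    have hle : g t₀ ≤ g (b l) := by rw [← hbl.gc]; exact ht₀min cl ⟨le_rfl, hdisj.le⟩
    rcases lt_or_eq_of_le hle with h | h
    · exact h
    exfalso
    have hinner : IsInnerLocalMin g cl := by
      refine ⟨⟨hcl0, hcl1⟩, min (cl - b l) (am - cl),
        lt_min (by linarith [hbl.lt_c]) (by linarith), fun x hx => ?_⟩
      rcases le_or_gt x cl with hxc | hxc
      · rcases eq_or_lt_of_le hxc with rfl | hxc'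
        · exact le_rfl
        · rw [hbl.gc]
          have h1 : b l < x := by have := min_le_left (cl - b l) (am - cl); linarith [hx.1]
          exact (hbl.right x h1 hxc').le
      · have h2 : x < am := by have := min_le_right (cl - b l) (am - cl); linarith [hx.2]
        calc g cl = g (b l) := hbl.gc
          _ = g t₀ := h.symm
          _ ≤ g x := ht₀min x ⟨hxc.le, h2.le⟩
    exact absurd (hg.distinct cl (b l) hinner hbl.strict.innerMin hbl.gc) (ne_of_gt hbl.lt_c)
  have hvm : g t₀ < g (b m) := by
    have hle : g t₀ ≤ g (b m) := by rw [← hbm.ga]; exact ht₀min am ⟨hdisj.le, le_rfl⟩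
    rcases lt_or_eq_of_le hle with h | h
    · exact h
    exfalso
    have hinner : IsInnerLocalMin g am := by
      refine ⟨⟨ham0, ham1⟩, min (am - cl) (b m - am),
        lt_min (by linarith) (by linarith [hbm.a_lt]), fun x hx => ?_⟩
      rcases le_or_gt am x with hxa | hxa
      · rcases eq_or_lt_of_le hxa with rfl | hxa'
        · exact le_rfl
        · rw [hbm.ga]
          have h1 : x < b m := by have := min_le_right (am - cl) (b m - am); linarith [hx.2]
          exact (hbm.left x hxa' h1).le
      · have h2 : cl < x := by have := min_le_left (am - cl) (b m - am); linarith [hx.1]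
        calc g am = g (b m) := hbm.ga
          _ = g t₀ := h.symm
          _ ≤ g x := ht₀min x ⟨h2.le, hxa.le⟩
    exact absurd (hg.distinct am (b m) hinner hbm.strict.innerMin hbm.ga) (ne_of_lt hbm.a_lt)
  have ht₀gt : cl < t₀ := by
    rcases eq_or_lt_of_le ht₀mem.1 with h | h
    · exfalso; rw [← h, hbl.gc] at hvl; exact lt_irrefl _ hvl
    · exact h
  have ht₀lt : t₀ < am := by
    rcases eq_or_lt_of_le ht₀mem.2 with h | h
    · exfalso; rw [h, hbm.ga] at hvl hvm; exact lt_irrefl _ hvm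
    · exact h
  have hinner₀ : IsInnerLocalMin g t₀ :=
    interior_argmin_inner hg hcl0.le ham1.le ⟨ht₀gt, ht₀lt⟩ ht₀min
  have hstrict₀ := innerMin_strict hg hinner₀
  obtain ⟨k, hk⟩ := (hb.2 t₀).mp hstrict₀
  have huniq : ∀ t ∈ Set.Icc cl am, g t = g t₀ → t = t₀ := by
    intro t ht heq
    have htne1 : t ≠ cl := by
      intro h; rw [h, hbl.gc] at heq; exact absurd heq (ne_of_gt hvl)
    have htne2 : t ≠ am := by
      intro h; rw [h, hbm.ga] at heq; exact absurd heq (ne_of_gt hvm)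
    have htIoo : t ∈ Set.Ioo cl am :=
      ⟨lt_of_le_of_ne ht.1 (Ne.symm htne1), lt_of_le_of_ne ht.2 htne2⟩
    have hinner_t : IsInnerLocalMin g t :=
      interior_argmin_inner hg hcl0.le ham1.le htIoo
        (fun t' ht' => by rw [heq]; exact ht₀min t' ht')
    exact hg.distinct t t₀ hinner_t hinner₀ heq
  subst hk
  have hbk := bf_enum hg hb k
  have hak : aPt g (b k) < aPt g (b l) := by
    by_contra hcon
    push_neg at hcon
    rcases le_or_gt (aPt g (b k)) cl with h2 | h2
    · have h3 := hbl.ge_on (aPt g (b k)) ⟨hcon, h2⟩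
      rw [hbk.ga] at h3
      linarith
    · have h3 := huniq (aPt g (b k)) ⟨h2.le, (hbk.a_lt.trans ht₀lt).le⟩ hbk.ga
      exact absurd h3 (ne_of_lt hbk.a_lt)
  have hck : cPt g (b m) < cPt g (b k) := by
    by_contra hcon
    push_neg at hcon
    rcases le_or_gt am (cPt g (b k)) with h2 | h2
    · have h3 := hbm.ge_on (cPt g (b k)) ⟨h2, hcon⟩
      rw [hbk.gc] at h3
      linarith
    · have h3 := huniq (cPt g (b k)) ⟨(ht₀gt.trans hbk.lt_c).le, h2.le⟩ hbk.gc
      exact absurd h3 (ne_of_gt hbk.lt_c)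
  refine ⟨k, ⟨ht₀gt, ht₀lt⟩, ?_, ?_, ?_, ?_⟩
  · exact fun x hx => ⟨hak.le.trans hx.1, hx.2.trans (ht₀gt.trans hbk.lt_c).le⟩
  · refine fun x hx => ⟨?_, hx.2.trans hck.le⟩
    exact ((hak.trans (hbl.a_lt.trans (hbl.lt_c.trans hdisj))).le).trans hx.1
  · intro h
    rw [h] at ht₀gt
    exact absurd ht₀gt (not_lt.mpr hbl.lt_c.le)
  · intro h
    rw [h] at ht₀lt
    exact absurd ht₀lt (not_lt.mpr hbm.a_lt.le)

section
variable {g : ℝ → ℝ} {b : ℕ → ℝ} {i j : ℕ} {q₁ q₂ : ℝ}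

/-- Window lemma, case `b i < aPt (b j)` (the descendant lies right of `b i`). -/
lemma window_right (hg : IsCRT g) (hb : IsEnum g b) (hij : i ≠ j)
    (hdesc : Set.Icc (aPt g (b j)) (cPt g (b j)) ⊆ Set.Icc (aPt g (b i)) (cPt g (b i)))
    (hr : b i < aPt g (b j))
    (hq : g (b i) < q₁) (hq' : q₁ < q₂) (hq'' : q₂ < g (b j)) :
    ∃ l, g (b l) ∈ Set.Icc q₁ q₂ ∧ l ≠ i ∧ l ≠ j ∧
      Set.Icc (aPt g (b l)) (cPt g (b l)) ⊆ Set.Icc (aPt g (b i)) (cPt g (b i)) ∧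
      Set.Icc (aPt g (b j)) (cPt g (b j)) ⊆ Set.Icc (aPt g (b l)) (cPt g (b l)) := by
  have hbi := bf_enum hg hb i
  have hbj := bf_enum hg hb j
  obtain ⟨hai, hci, hh, -⟩ := desc_facts hg hb hij hdesc
  have hbibj : b i < b j := hr.trans hbj.a_lt
  have hbi0 : 0 < b i := hbi.a_pos.trans hbi.a_lt
  have hbj1 : b j < 1 := hbj.lt_c.trans hbj.c_lt
  set S₁ := {t ∈ Set.Icc (b i) (b j) | g t < q₁} with hS₁def
  set S₂ := {t ∈ Set.Icc (b i) (b j) | g t < q₂} with hS₂def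
  have hbi₁ : b i ∈ S₁ := ⟨⟨le_rfl, hbibj.le⟩, hq⟩
  have hbi₂ : b i ∈ S₂ := ⟨⟨le_rfl, hbibj.le⟩, hq.trans hq'⟩
  have hbdd₁ : BddAbove S₁ := ⟨b j, fun t ht => ht.1.2⟩
  have hbdd₂ : BddAbove S₂ := ⟨b j, fun t ht => ht.1.2⟩
  set x₁ := sSup S₁ with hx₁def
  set x₂ := sSup S₂ with hx₂def
  have hx₁lb : b i ≤ x₁ := le_csSup hbdd₁ hbi₁
  have hx₁ub : x₁ ≤ b j := csSup_le ⟨b i, hbi₁⟩ fun t ht => ht.1.2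
  have hub₁ : ∀ t ∈ Set.Icc (b i) (b j), x₁ < t → q₁ ≤ g t := by
    intro t ht hgt
    by_contra hcon
    exact absurd (le_csSup hbdd₁ ⟨ht, not_le.mp hcon⟩) (not_le.mpr hgt)
  have hub₂ : ∀ t ∈ Set.Icc (b i) (b j), x₂ < t → q₂ ≤ g t := by
    intro t ht hgt
    by_contra hcon
    exact absurd (le_csSup hbdd₂ ⟨ht, not_le.mp hcon⟩) (not_le.mpr hgt)
  -- x₂ < b j
  have hx₂lt : x₂ < b j := by
    obtain ⟨-, ε, hε, hlt⟩ := hbj.strict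
    have hε' : 0 < min (ε/2) ((b j - b i)/2) := lt_min (half_pos hε) (by linarith)
    have hble : ∀ t ∈ S₂, t ≤ b j - min (ε/2) ((b j - b i)/2) := by
      intro t ht
      by_contra hcon
      push_neg at hcon
      rcases eq_or_lt_of_le ht.1.2 with he | hlt'
      · rw [he] at ht; linarith [ht.2]
      · have h1 : t ∈ Set.Ioo (b j - ε) (b j + ε) := by
          constructor
          · have := min_le_left (ε/2) ((b j - b i)/2); linarith
          · linarith
        exact absurd ht.2 (not_lt.mpr ((hlt t h1 (ne_of_lt hlt')).le.trans' hq''.le))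
    have := csSup_le ⟨b i, hbi₂⟩ hble
    linarith
  have hx₁x₂le : x₁ ≤ x₂ := csSup_le_csSup hbdd₂ ⟨b i, hbi₁⟩ fun t ht => ⟨ht.1, ht.2.trans hq'⟩
  -- g x₁ ≤ q₁ via closedness
  have hx₁01 : x₁ ∈ Set.Icc (0:ℝ) 1 := ⟨(hbi0.trans_le hx₁lb).le, hx₁ub.trans hbj1.le⟩
  have hgx₁ : g x₁ ≤ q₁ := by
    have hC : IsClosed {t ∈ Set.Icc (0:ℝ) 1 | g t ≤ q₁} := by
      have h' := hg.cont.preimage_isClosed_of_isClosed isClosed_Icc (isClosed_Iic (a := q₁))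
      have : Set.Icc (0:ℝ) 1 ∩ g ⁻¹' Set.Iic q₁ = {t ∈ Set.Icc (0:ℝ) 1 | g t ≤ q₁} := by
        ext t; simp [Set.mem_inter_iff, Set.mem_preimage, Set.mem_sep_iff]
      rwa [this] at h'
    have hsub : S₁ ⊆ {t ∈ Set.Icc (0:ℝ) 1 | g t ≤ q₁} := by
      rintro t ⟨ht1, ht2⟩
      exact ⟨⟨(hbi0.trans_le ht1.1).le, ht1.2.trans hbj1.le⟩, ht2.le⟩
    exact (hC.closure_subset ((closure_mono hsub)
      ((Real.isLUB_sSup ⟨b i, hbi₁⟩ hbdd₁).mem_closure ⟨b i, hbi₁⟩))).2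
  -- x₁ < x₂ : find a point of S₂ just right of x₁
  have hx₁bj : x₁ < b j := lt_of_le_of_lt hx₁x₂le hx₂lt
  have hx₁x₂ : x₁ < x₂ := by
    have hsubIoo : Set.Ioo x₁ (b j) ⊆ Set.Icc (0:ℝ) 1 :=
      fun z hz => ⟨((hbi0.trans_le hx₁lb).trans hz.1).le, (hz.2.trans hbj1).le⟩
    have htend : Filter.Tendsto g (nhdsWithin x₁ (Set.Ioo x₁ (b j))) (nhds (g x₁)) :=
      (hg.cont x₁ hx₁01).mono_left (nhdsWithin_mono _ hsubIoo)
    have hev : ∀ᶠ z in nhdsWithin x₁ (Set.Ioo x₁ (b j)), g z < q₂ :=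
      htend.eventually_lt_const (by linarith)
    have hev2 : ∀ᶠ z in nhdsWithin x₁ (Set.Ioo x₁ (b j)), z ∈ Set.Ioo x₁ (b j) :=
      eventually_mem_nhdsWithin
    have hne : (nhdsWithin x₁ (Set.Ioo x₁ (b j))).NeBot := by
      rw [nhdsWithin_Ioo_eq_nhdsGT hx₁bj]
      exact nhdsGT_neBot x₁
    obtain ⟨z, hz1, hz2⟩ := (hev.and hev2).exists
    have : z ∈ S₂ := ⟨⟨hx₁lb.trans hz2.1.le, hz2.2.le⟩, hz1⟩
    exact lt_of_lt_of_le hz2.1 (le_csSup hbdd₂ this)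
  -- key: a point of [x₁, x₂) after which g strictly drops
  have hkey : ∃ t ∈ Set.Ico x₁ x₂, ∃ u ∈ Set.Ioc t (b j), g u < g t := by
    by_contra hcon
    push_neg at hcon
    set y := (x₁ + x₂)/2 with hydef
    have hy : y ∈ Set.Icc (0:ℝ) 1 :=
      ⟨by linarith [hx₁01.1], by linarith [hx₂lt, hbj1, hx₁x₂]⟩
    obtain ⟨β', hβ'min, hβ'near⟩ := Metric.mem_closure_iff.mp (hg.dense_min y hy)
      ((x₂ - x₁)/2) (by linarith)
    have hβ'Ioo : β' ∈ Set.Ioo x₁ x₂ := by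
      have := abs_sub_lt_iff.mp (by rwa [Real.dist_eq] at hβ'near)
      constructor <;> [linarith [this.2]; linarith [this.1]]
    obtain ⟨hβ'mem, ε, hε, hβ'le⟩ := hβ'min
    set ε'' := min ε (min (β' - x₁) (x₂ - β')) with hε''def
    have hε''pos : 0 < ε'' := lt_min hε (lt_min (by linarith [hβ'Ioo.1]) (by linarith [hβ'Ioo.2]))
    have hε''1 : ε'' ≤ ε := min_le_left _ _
    have hε''2 : ε'' ≤ β' - x₁ := (min_le_right _ _).trans (min_le_left _ _)
    have hε''3 : ε'' ≤ x₂ - β' := (min_le_right _ _).trans (min_le_right _ _)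
    have hconst : ∀ z ∈ Set.Ioo (β' - ε'') β', g z = g β' := by
      intro z hz
      refine le_antisymm ?_ (hβ'le z ⟨by linarith [hz.1], by linarith [hz.2]⟩)
      refine hcon z ⟨by linarith [hz.1], by linarith [hz.2]⟩ β' ⟨hz.2, ?_⟩
      linarith [hβ'Ioo.2, hx₂lt]
    have hβ''inner : IsInnerLocalMin g (β' - ε''/2) := by
      refine ⟨⟨by linarith [hx₁01.1, hβ'Ioo.1], by
        linarith [hβ'Ioo.2, hx₂lt, hbj1]⟩, ε''/4, by linarith, fun z hz => ?_⟩
      rw [hconst (β' - ε''/2) ⟨by linarith, by linarith⟩,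
        hconst z ⟨by linarith [hz.1], by linarith [hz.2]⟩]
    have heq := hconst (β' - ε''/2) ⟨by linarith, by linarith⟩
    exact absurd (hg.distinct (β' - ε''/2) β' hβ''inner ⟨hβ'mem, ε, hε, hβ'le⟩ heq)
      (by intro h; linarith)
  obtain ⟨t, ht, u₀, hu₀, hu₀lt⟩ := hkey
  have ht0 : 0 < t := hbi0.trans_le (hx₁lb.trans ht.1)
  have htbj : t < b j := lt_of_lt_of_le ht.2 (hx₂lt.le)
  obtain ⟨β, hβmem, hβmin'⟩ := isCompact_Icc.exists_isMinOn
    (Set.nonempty_Icc.mpr htbj.le) (isCRT_contOn hg ht0.le hbj1.le)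
  have hβmin : ∀ z ∈ Set.Icc t (b j), g β ≤ g z := fun z hz => hβmin' hz
  obtain ⟨tt, htt, httgt⟩ := exists_lt_of_lt_csSup ⟨b i, hbi₂⟩ ht.2
  have hβub : g β < q₂ := lt_of_le_of_lt (hβmin tt ⟨httgt.le, htt.1.2⟩) htt.2
  have hβnet : β ≠ t := by
    intro h
    have := hβmin u₀ ⟨hu₀.1.le, hu₀.2⟩
    rw [h] at this
    linarith
  have hβgt : t < β := lt_of_le_of_ne hβmem.1 (Ne.symm hβnet)
  have hβlb : q₁ ≤ g β :=
    hub₁ β ⟨(hx₁lb.trans ht.1).trans hβgt.le, hβmem.2⟩ (lt_of_le_of_lt ht.1 hβgt)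
  have hβnebj : β ≠ b j := by
    intro h; rw [h] at hβub; linarith
  have hβIoo : β ∈ Set.Ioo t (b j) := ⟨hβgt, lt_of_le_of_ne hβmem.2 hβnebj⟩
  have hβinner : IsInnerLocalMin g β := interior_argmin_inner hg ht0.le hbj1.le hβIoo hβmin
  obtain ⟨l, hl⟩ := (hb.2 β).mp (innerMin_strict hg hβinner)
  subst hl
  have hbl := bf_enum hg hb l
  have huniqβ : ∀ z ∈ Set.Icc t (b j), g z = g (b l) → z = b l := by
    intro z hz heq
    have hznet : z ≠ t := by
      intro h
      rw [h] at heq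
      have := hβmin u₀ ⟨hu₀.1.le, hu₀.2⟩
      linarith [heq ▸ hu₀lt]
    have hznebj : z ≠ b j := by
      intro h
      rw [h] at heq
      linarith [heq ▸ hβub]
    have hzIoo : z ∈ Set.Ioo t (b j) :=
      ⟨lt_of_le_of_ne hz.1 (Ne.symm hznet), lt_of_le_of_ne hz.2 hznebj⟩
    exact hg.distinct z (b l)
      (interior_argmin_inner hg ht0.le hbj1.le hzIoo
        (fun z' hz' => by rw [heq]; exact hβmin z' hz'))
      hβinner heq
  have hbli : b i < b l := lt_of_le_of_lt (hx₁lb.trans ht.1) hβgt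
  have hblbj : b l < b j := hβIoo.2
  have hlni : l ≠ i := by
    intro h; rw [h] at hβlb; linarith
  have hlnj : l ≠ j := by
    intro h; rw [h] at hβub; linarith
  -- a_j > b l
  have hblaj : b l < aPt g (b j) := by
    obtain ⟨p, hp1, hp2, hp3⟩ := pt_near_left hbj.strict hblbj
    have hivt := intermediate_value_Icc hp1.le
      (isCRT_contOn hg (ht0.trans hβgt).le (by linarith [hbj1]))
    obtain ⟨w, hw1, hw2⟩ := hivt (⟨by linarith, hp3.le⟩ : g (b j) ∈ Set.Icc (g (b l)) (g p))
    have hwne : w ≠ b l := by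
      intro h; rw [h] at hw2; linarith [hw2 ▸ hβub]
    have : w ≤ aPt g (b j) :=
      le_csSup ⟨b j, fun z hz => hz.1.le⟩ ⟨by linarith [hw1.2], hw2⟩
    exact lt_of_lt_of_le (lt_of_le_of_ne hw1.1 (Ne.symm hwne)) this
  -- c_j ≤ c_l
  have hcjcl : cPt g (b j) ≤ cPt g (b l) := by
    refine le_csInf ⟨cPt g (b l), hbl.lt_c, hbl.gc⟩ ?_
    rintro z ⟨hz1, hz2⟩
    by_contra hcon
    push_neg at hcon
    rcases le_or_gt z (b j) with h | h
    · exact absurd (huniqβ z ⟨(hβgt.trans hz1).le, h⟩ hz2) (ne_of_gt hz1)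
    · have := hbj.ge_on z ⟨(hbj.a_lt.trans h).le, hcon.le⟩
      rw [hz2] at this
      linarith
  -- a_i < a_l
  have haial : aPt g (b i) < aPt g (b l) := by
    obtain ⟨p, hp1, hp2, hp3⟩ := pt_near_left hbl.strict hbli
    have hivt := intermediate_value_Icc hp1.le
      (isCRT_contOn hg hbi0.le (by linarith [hbj1, hβIoo.2]))
    obtain ⟨w, hw1, hw2⟩ := hivt (⟨by linarith, hp3.le⟩ : g (b l) ∈ Set.Icc (g (b i)) (g p))
    have hwne : w ≠ b i := by
      intro h; rw [h] at hw2; linarith [hw2 ▸ hβlb]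
    have : w ≤ aPt g (b l) :=
      le_csSup ⟨b l, fun z hz => hz.1.le⟩ ⟨by linarith [hw1.2], hw2⟩
    calc aPt g (b i) < b i := hbi.a_lt.trans_le le_rfl
      _ < w := lt_of_le_of_ne hw1.1 (Ne.symm hwne)
      _ ≤ aPt g (b l) := this
  -- c_l < c_i
  have hclci : cPt g (b l) < cPt g (b i) := by
    have hbjci : b j < cPt g (b i) := lt_of_lt_of_le hbj.lt_c hci.le
    obtain ⟨p, hp1, hp2, hp3⟩ := pt_near_right hbj.strict hbjci
    have hivt := intermediate_value_Icc' hp1.le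
      (isCRT_contOn hg (by linarith [ht0, hβIoo.2, hblbj]) hbi.c_lt.le)
    obtain ⟨w, hw1, hw2⟩ := hivt (by
      rw [hbi.gc]
      exact ⟨by linarith, by linarith⟩ : g (b l) ∈ Set.Icc (g (cPt g (b i))) (g p))
    have hwne : w ≠ cPt g (b i) := by
      intro h
      rw [h, hbi.gc] at hw2
      linarith [hw2 ▸ hβlb]
    have : cPt g (b l) ≤ w :=
      csInf_le ⟨b l, fun z hz => hz.1.le⟩ ⟨by linarith [hw1.1], hw2⟩
    exact lt_of_le_of_lt this (lt_of_le_of_ne hw1.2 hwne)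
  refine ⟨l, ⟨hβlb, hβub.le⟩, hlni, hlnj, ?_, ?_⟩
  · exact fun x hx => ⟨haial.le.trans hx.1, hx.2.trans hclci.le⟩
  · intro x hx
    exact ⟨(hbl.a_lt.trans hblaj).le.trans hx.1, hx.2.trans hcjcl⟩

/-- Window lemma, case `cPt (b j) < b i` (the descendant lies left of `b i`). -/
lemma window_left (hg : IsCRT g) (hb : IsEnum g b) (hij : i ≠ j)
    (hdesc : Set.Icc (aPt g (b j)) (cPt g (b j)) ⊆ Set.Icc (aPt g (b i)) (cPt g (b i)))
    (hl' : cPt g (b j) < b i)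
    (hq : g (b i) < q₁) (hq' : q₁ < q₂) (hq'' : q₂ < g (b j)) :
    ∃ l, g (b l) ∈ Set.Icc q₁ q₂ ∧ l ≠ i ∧ l ≠ j ∧
      Set.Icc (aPt g (b l)) (cPt g (b l)) ⊆ Set.Icc (aPt g (b i)) (cPt g (b i)) ∧
      Set.Icc (aPt g (b j)) (cPt g (b j)) ⊆ Set.Icc (aPt g (b l)) (cPt g (b l)) := by
  have hbi := bf_enum hg hb i
  have hbj := bf_enum hg hb j
  obtain ⟨hai, hci, hh, -⟩ := desc_facts hg hb hij hdesc
  have hbjbi : b j < b i := hbj.lt_c.trans hl'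
  have hbj0 : 0 < b j := hbj.a_pos.trans hbj.a_lt
  have hbi1 : b i < 1 := hbi.lt_c.trans hbi.c_lt
  set S₁ := {t ∈ Set.Icc (b j) (b i) | g t < q₁} with hS₁def
  set S₂ := {t ∈ Set.Icc (b j) (b i) | g t < q₂} with hS₂def
  have hbi₁ : b i ∈ S₁ := ⟨⟨hbjbi.le, le_rfl⟩, hq⟩
  have hbi₂ : b i ∈ S₂ := ⟨⟨hbjbi.le, le_rfl⟩, hq.trans hq'⟩
  have hbdd₁ : BddBelow S₁ := ⟨b j, fun t ht => ht.1.1⟩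
  have hbdd₂ : BddBelow S₂ := ⟨b j, fun t ht => ht.1.1⟩
  set x₁ := sInf S₁ with hx₁def
  set x₂ := sInf S₂ with hx₂def
  have hx₁ub : x₁ ≤ b i := csInf_le hbdd₁ hbi₁
  have hx₁lb : b j ≤ x₁ := le_csInf ⟨b i, hbi₁⟩ fun t ht => ht.1.1
  have hub₁ : ∀ t ∈ Set.Icc (b j) (b i), t < x₁ → q₁ ≤ g t := by
    intro t ht hgt
    by_contra hcon
    exact absurd (csInf_le hbdd₁ ⟨ht, not_le.mp hcon⟩) (not_le.mpr hgt)
  -- b j < x₂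
  have hx₂gt : b j < x₂ := by
    obtain ⟨-, ε, hε, hlt⟩ := hbj.strict
    have hε' : 0 < min (ε/2) ((b i - b j)/2) := lt_min (half_pos hε) (by linarith)
    have hble : ∀ t ∈ S₂, b j + min (ε/2) ((b i - b j)/2) ≤ t := by
      intro t ht
      by_contra hcon
      push_neg at hcon
      rcases eq_or_lt_of_le ht.1.1 with he | hlt'
      · rw [← he] at ht; linarith [ht.2]
      · have h1 : t ∈ Set.Ioo (b j - ε) (b j + ε) := by
          constructor
          · linarith
          · have := min_le_left (ε/2) ((b i - b j)/2); linarith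
        exact absurd ht.2 (not_lt.mpr ((hlt t h1 (ne_of_gt hlt')).le.trans' hq''.le))
    have := le_csInf ⟨b i, hbi₂⟩ hble
    linarith
  have hx₂x₁le : x₂ ≤ x₁ := le_csInf ⟨b i, hbi₁⟩ fun t ht => csInf_le hbdd₂ ⟨ht.1, ht.2.trans hq'⟩
  have hx₁01 : x₁ ∈ Set.Icc (0:ℝ) 1 := ⟨(hbj0.trans_le hx₁lb).le, (hx₁ub.trans hbi1.le)⟩
  have hgx₁ : g x₁ ≤ q₁ := by
    have hC : IsClosed {t ∈ Set.Icc (0:ℝ) 1 | g t ≤ q₁} := by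
      have h' := hg.cont.preimage_isClosed_of_isClosed isClosed_Icc (isClosed_Iic (a := q₁))
      have : Set.Icc (0:ℝ) 1 ∩ g ⁻¹' Set.Iic q₁ = {t ∈ Set.Icc (0:ℝ) 1 | g t ≤ q₁} := by
        ext t; simp [Set.mem_inter_iff, Set.mem_preimage, Set.mem_sep_iff]
      rwa [this] at h'
    have hsub : S₁ ⊆ {t ∈ Set.Icc (0:ℝ) 1 | g t ≤ q₁} := by
      rintro t ⟨ht1, ht2⟩
      exact ⟨⟨(hbj0.trans_le ht1.1).le, ht1.2.trans hbi1.le⟩, ht2.le⟩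
    exact (hC.closure_subset ((closure_mono hsub)
      ((Real.isGLB_sInf ⟨b i, hbi₁⟩ hbdd₁).mem_closure ⟨b i, hbi₁⟩))).2
  have hbjx₁ : b j < x₁ := lt_of_lt_of_le hx₂gt hx₂x₁le
  have hx₂x₁ : x₂ < x₁ := by
    have hsubIoo : Set.Ioo (b j) x₁ ⊆ Set.Icc (0:ℝ) 1 :=
      fun z hz => ⟨(hbj0.trans hz.1).le, ((hz.2.trans_le hx₁ub).trans hbi1).le⟩
    have htend : Filter.Tendsto g (nhdsWithin x₁ (Set.Ioo (b j) x₁)) (nhds (g x₁)) :=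
      (hg.cont x₁ hx₁01).mono_left (nhdsWithin_mono _ hsubIoo)
    have hev : ∀ᶠ z in nhdsWithin x₁ (Set.Ioo (b j) x₁), g z < q₂ :=
      htend.eventually_lt_const (by linarith)
    have hev2 : ∀ᶠ z in nhdsWithin x₁ (Set.Ioo (b j) x₁), z ∈ Set.Ioo (b j) x₁ :=
      eventually_mem_nhdsWithin
    have hne : (nhdsWithin x₁ (Set.Ioo (b j) x₁)).NeBot := by
      rw [nhdsWithin_Ioo_eq_nhdsLT hbjx₁]
      exact nhdsLT_neBot x₁
    obtain ⟨z, hz1, hz2⟩ := (hev.and hev2).exists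
    have : z ∈ S₂ := ⟨⟨hz2.1.le, hz2.2.le.trans hx₁ub⟩, hz1⟩
    exact lt_of_le_of_lt (csInf_le hbdd₂ this) hz2.2
  have hkey : ∃ t ∈ Set.Ioc x₂ x₁, ∃ u ∈ Set.Ico (b j) t, g u < g t := by
    by_contra hcon
    push_neg at hcon
    set y := (x₂ + x₁)/2 with hydef
    have hy : y ∈ Set.Icc (0:ℝ) 1 :=
      ⟨by linarith [hbj0, hx₂gt], by linarith [hx₁01.2, hx₂x₁]⟩
    obtain ⟨β', hβ'min, hβ'near⟩ := Metric.mem_closure_iff.mp (hg.dense_min y hy)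
      ((x₁ - x₂)/2) (by linarith)
    have hβ'Ioo : β' ∈ Set.Ioo x₂ x₁ := by
      have := abs_sub_lt_iff.mp (by rwa [Real.dist_eq] at hβ'near)
      constructor <;> [linarith [this.2]; linarith [this.1]]
    obtain ⟨hβ'mem, ε, hε, hβ'le⟩ := hβ'min
    set ε'' := min ε (min (β' - x₂) (x₁ - β')) with hε''def
    have hε''pos : 0 < ε'' := lt_min hε (lt_min (by linarith [hβ'Ioo.1]) (by linarith [hβ'Ioo.2]))
    have hε''1 : ε'' ≤ ε := min_le_left _ _
    have hε''2 : ε'' ≤ β' - x₂ := (min_le_right _ _).trans (min_le_left _ _)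
    have hε''3 : ε'' ≤ x₁ - β' := (min_le_right _ _).trans (min_le_right _ _)
    have hconst : ∀ z ∈ Set.Ioo β' (β' + ε''), g z = g β' := by
      intro z hz
      refine le_antisymm ?_ (hβ'le z ⟨by linarith [hz.1], by linarith [hz.2]⟩)
      refine hcon z ⟨by linarith [hz.1], by linarith [hz.2]⟩ β' ⟨?_, hz.1⟩
      linarith [hβ'Ioo.1, hx₂gt]
    have hβ''inner : IsInnerLocalMin g (β' + ε''/2) := by
      refine ⟨⟨by linarith [hbj0, hx₂gt, hβ'Ioo.1], by
        linarith [hβ'Ioo.2, hx₁01.2]⟩, ε''/4, by linarith, fun z hz => ?_⟩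
      rw [hconst (β' + ε''/2) ⟨by linarith, by linarith⟩,
        hconst z ⟨by linarith [hz.1], by linarith [hz.2]⟩]
    have heq := hconst (β' + ε''/2) ⟨by linarith, by linarith⟩
    exact absurd (hg.distinct (β' + ε''/2) β' hβ''inner ⟨hβ'mem, ε, hε, hβ'le⟩ heq)
      (by intro h; linarith)
  obtain ⟨t, ht, u₀, hu₀, hu₀lt⟩ := hkey
  have ht1 : t < 1 := lt_of_le_of_lt (ht.2.trans hx₁ub) hbi1
  have htbj : b j < t := hx₂gt.trans ht.1
  obtain ⟨β, hβmem, hβmin'⟩ := isCompact_Icc.exists_isMinOn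
    (Set.nonempty_Icc.mpr htbj.le) (isCRT_contOn hg hbj0.le ht1.le)
  have hβmin : ∀ z ∈ Set.Icc (b j) t, g β ≤ g z := fun z hz => hβmin' hz
  obtain ⟨tt, htt, httlt⟩ := exists_lt_of_csInf_lt ⟨b i, hbi₂⟩ ht.1
  have hβub : g β < q₂ := lt_of_le_of_lt (hβmin tt ⟨htt.1.1, httlt.le⟩) htt.2
  have hβnet : β ≠ t := by
    intro h
    have := hβmin u₀ ⟨hu₀.1, hu₀.2.le⟩
    rw [h] at this
    linarith
  have hβlt : β < t := lt_of_le_of_ne hβmem.2 hβnet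
  have hβlb : q₁ ≤ g β :=
    hub₁ β ⟨hβmem.1, hβlt.le.trans (ht.2.trans hx₁ub)⟩ (lt_of_lt_of_le hβlt ht.2)
  have hβnebj : β ≠ b j := by
    intro h; rw [h] at hβub; linarith
  have hβIoo : β ∈ Set.Ioo (b j) t := ⟨lt_of_le_of_ne hβmem.1 (Ne.symm hβnebj), hβlt⟩
  have hβinner : IsInnerLocalMin g β := interior_argmin_inner hg hbj0.le ht1.le hβIoo hβmin
  obtain ⟨l, hl⟩ := (hb.2 β).mp (innerMin_strict hg hβinner)
  subst hl
  have hbl := bf_enum hg hb l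
  have huniqβ : ∀ z ∈ Set.Icc (b j) t, g z = g (b l) → z = b l := by
    intro z hz heq
    have hznet : z ≠ t := by
      intro h
      rw [h] at heq
      have := hβmin u₀ ⟨hu₀.1, hu₀.2.le⟩
      linarith [heq ▸ hu₀lt]
    have hznebj : z ≠ b j := by
      intro h
      rw [h] at heq
      linarith [heq ▸ hβub]
    have hzIoo : z ∈ Set.Ioo (b j) t :=
      ⟨lt_of_le_of_ne hz.1 (Ne.symm hznebj), lt_of_le_of_ne hz.2 hznet⟩
    exact hg.distinct z (b l)
      (interior_argmin_inner hg hbj0.le ht1.le hzIoo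
        (fun z' hz' => by rw [heq]; exact hβmin z' hz'))
      hβinner heq
  have hblbi : b l < b i := lt_of_lt_of_le hβlt (ht.2.trans hx₁ub)
  have hbjbl : b j < b l := hβIoo.1
  have hlni : l ≠ i := by
    intro h; rw [h] at hβlb; linarith
  have hlnj : l ≠ j := by
    intro h; rw [h] at hβub; linarith
  -- c_j < b l
  have hcjbl : cPt g (b j) < b l := by
    obtain ⟨p, hp1, hp2, hp3⟩ := pt_near_right hbj.strict hbjbl
    have hivt := intermediate_value_Icc' hp1.le
      (isCRT_contOn hg (hbj0.trans hp2).le (by linarith [hblbi, hbi1]))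
    obtain ⟨w, hw1, hw2⟩ := hivt (⟨by linarith, hp3.le⟩ : g (b j) ∈ Set.Icc (g (b l)) (g p))
    have hwne : w ≠ b l := by
      intro h; rw [h] at hw2; linarith [hw2 ▸ hβub]
    have : cPt g (b j) ≤ w :=
      csInf_le ⟨b j, fun z hz => hz.1.le⟩ ⟨by linarith [hw1.1], hw2⟩
    exact lt_of_le_of_lt this (lt_of_le_of_ne hw1.2 hwne)
  -- a_l ≤ a_j
  have halaj : aPt g (b l) ≤ aPt g (b j) := by
    refine csSup_le ⟨aPt g (b l), hbl.a_lt, hbl.ga⟩ ?_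
    rintro z ⟨hz1, hz2⟩
    by_contra hcon
    push_neg at hcon
    rcases le_or_gt (b j) z with h | h
    · exact absurd (huniqβ z ⟨h, (hz1.trans hβlt).le⟩ hz2) (ne_of_lt hz1)
    · have := hbj.ge_on z ⟨hcon.le, (h.trans hbj.lt_c).le⟩
      rw [hz2] at this
      linarith
  -- c_l < c_i
  have hclci : cPt g (b l) < cPt g (b i) := by
    obtain ⟨p, hp1, hp2, hp3⟩ := pt_near_right hbl.strict hblbi
    have hivt := intermediate_value_Icc' hp1.le
      (isCRT_contOn hg (hbj0.trans (hbjbl.trans hp2)).le hbi1.le)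
    obtain ⟨w, hw1, hw2⟩ := hivt (⟨by linarith, hp3.le⟩ : g (b l) ∈ Set.Icc (g (b i)) (g p))
    have hwne : w ≠ b i := by
      intro h; rw [h] at hw2; linarith [hw2 ▸ hβlb]
    have : cPt g (b l) ≤ w :=
      csInf_le ⟨b l, fun z hz => hz.1.le⟩ ⟨by linarith [hw1.1], hw2⟩
    calc cPt g (b l) ≤ w := this
      _ < b i := lt_of_le_of_ne hw1.2 hwne
      _ < cPt g (b i) := hbi.lt_c
  -- a_i < a_l
  have haial : aPt g (b i) < aPt g (b l) := by
    have haibj : aPt g (b i) < b j := lt_of_lt_of_le hai (hbj.a_lt.le)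
    obtain ⟨p, hp1, hp2, hp3⟩ := pt_near_left hbj.strict haibj
    have hivt := intermediate_value_Icc hp1.le
      (isCRT_contOn hg hbi.a_pos.le (by linarith [hbj0, hp2, hbjbi, hbi1]))
    obtain ⟨w, hw1, hw2⟩ := hivt (by
      rw [hbi.ga]
      exact ⟨by linarith, by linarith⟩ : g (b l) ∈ Set.Icc (g (aPt g (b i))) (g p))
    have hwne : w ≠ aPt g (b i) := by
      intro h
      rw [h, hbi.ga] at hw2
      linarith [hw2 ▸ hβlb]
    have : w ≤ aPt g (b l) :=
      le_csSup ⟨b l, fun z hz => hz.1.le⟩ ⟨by linarith [hw1.2, hbjbl], hw2⟩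
    exact lt_of_lt_of_le (lt_of_le_of_ne hw1.1 (Ne.symm hwne)) this
  refine ⟨l, ⟨hβlb, hβub.le⟩, hlni, hlnj, ?_, ?_⟩
  · exact fun x hx => ⟨haial.le.trans hx.1, hx.2.trans hclci.le⟩
  · intro x hx
    exact ⟨halaj.trans hx.1, hx.2.trans (hcjbl.trans hbl.lt_c).le⟩

/-- Window lemma. -/
lemma window (hg : IsCRT g) (hb : IsEnum g b) (hij : i ≠ j)
    (hdesc : Set.Icc (aPt g (b j)) (cPt g (b j)) ⊆ Set.Icc (aPt g (b i)) (cPt g (b i)))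
    (hq : g (b i) < q₁) (hq' : q₁ < q₂) (hq'' : q₂ < g (b j)) :
    ∃ l, g (b l) ∈ Set.Icc q₁ q₂ ∧ l ≠ i ∧ l ≠ j ∧
      Set.Icc (aPt g (b l)) (cPt g (b l)) ⊆ Set.Icc (aPt g (b i)) (cPt g (b i)) ∧
      Set.Icc (aPt g (b j)) (cPt g (b j)) ⊆ Set.Icc (aPt g (b l)) (cPt g (b l)) := by
  obtain ⟨-, -, -, hside⟩ := desc_facts hg hb hij hdesc
  rcases hside with hr | hl
  · exact window_right hg hb hij hdesc hr hq hq' hq''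
  · exact window_left hg hb hij hdesc hl hq hq' hq''

section
variable {g : ℝ → ℝ} {b : ℕ → ℝ} {i j : ℕ} {q₁ q₂ : ℝ}

lemma exists_subwindow {H : Set ℝ} (hH : H.Finite) (h : q₁ < q₂) :
    ∃ q₁' q₂', q₁ < q₁' ∧ q₁' < q₂' ∧ q₂' < q₂ ∧ ∀ y ∈ Set.Icc q₁' q₂', y ∉ H := by
  set H' := H ∩ Set.Ioo q₁ q₂ with hH'def
  have hH' : H'.Finite := hH.inter_of_left _
  rcases H'.eq_empty_or_nonempty with he | hne
  · refine ⟨q₁ + (q₂-q₁)/3, q₁ + 2*((q₂-q₁)/3), by linarith, by linarith, by linarith, ?_⟩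
    intro y hy hyH
    have : y ∈ H' := ⟨hyH, by constructor <;> [linarith [hy.1]; linarith [hy.2]]⟩
    rw [he] at this
    exact this
  · have hFne : hH'.toFinset.Nonempty := by
      rwa [Set.Finite.toFinset_nonempty]
    set h₀ := hH'.toFinset.min' hFne with hh₀def
    have hh₀mem : h₀ ∈ H' := by
      rw [← Set.Finite.mem_toFinset hH']
      exact hH'.toFinset.min'_mem hFne
    have hh₀min : ∀ y ∈ H', h₀ ≤ y := fun y hy =>
      hH'.toFinset.min'_le y ((Set.Finite.mem_toFinset hH').mpr hy)
    have h1 : q₁ < h₀ := hh₀mem.2.1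
    have h2 : h₀ < q₂ := hh₀mem.2.2
    refine ⟨q₁ + (h₀-q₁)/3, q₁ + 2*((h₀-q₁)/3), by linarith, by linarith, by linarith, ?_⟩
    intro y hy hyH
    have hy' : y ∈ H' := ⟨hyH, by constructor <;> [linarith [hy.1]; linarith [hy.2]]⟩
    exact absurd (hh₀min y hy') (not_le.mpr (by linarith [hy.2]))

lemma window_infinite (hg : IsCRT g) (hb : IsEnum g b) (hij : i ≠ j)
    (hdesc : Set.Icc (aPt g (b j)) (cPt g (b j)) ⊆ Set.Icc (aPt g (b i)) (cPt g (b i)))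
    (hq : g (b i) < q₁) (hq' : q₁ < q₂) (hq'' : q₂ < g (b j)) :
    {l | g (b l) ∈ Set.Ioo q₁ q₂ ∧ l ≠ i ∧ l ≠ j ∧
      Set.Icc (aPt g (b l)) (cPt g (b l)) ⊆ Set.Icc (aPt g (b i)) (cPt g (b i)) ∧
      Set.Icc (aPt g (b j)) (cPt g (b j)) ⊆ Set.Icc (aPt g (b l)) (cPt g (b l))}.Infinite := by
  set L := {l | g (b l) ∈ Set.Ioo q₁ q₂ ∧ l ≠ i ∧ l ≠ j ∧
      Set.Icc (aPt g (b l)) (cPt g (b l)) ⊆ Set.Icc (aPt g (b i)) (cPt g (b i)) ∧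
      Set.Icc (aPt g (b j)) (cPt g (b j)) ⊆ Set.Icc (aPt g (b l)) (cPt g (b l))} with hLdef
  intro hfin
  have hHfin : ((fun l => g (b l)) '' L).Finite := hfin.image _
  obtain ⟨q₁', q₂', ha1, ha2, ha3, ha4⟩ := exists_subwindow hHfin hq'
  obtain ⟨l, hl1, hl2, hl3, hl4, hl5⟩ :=
    window hg hb hij hdesc (lt_trans hq ha1) ha2 (lt_trans ha3 hq'')
  have hlL : l ∈ L :=
    ⟨⟨lt_of_lt_of_le ha1 hl1.1, lt_of_le_of_lt hl1.2 ha3⟩, hl2, hl3, hl4, hl5⟩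
  exact ha4 (g (b l)) hl1 ⟨l, hlL, rfl⟩
end

section
open ProbabilityTheory
variable {Ω : Type*} [MeasurableSpace Ω]

lemma prob_all_ne_sign (P : Measure Ω) [IsProbabilityMeasure P]
    (S : Ω → ℕ → Bool) (hmeas : ∀ i, Measurable fun ω => S ω i)
    (hindep : iIndepFun (fun i ω => S ω i) P)
    {p : ℝ} (hp : p ∈ Set.Ioo (0:ℝ) 1)
    (hbias : ∀ i, P {ω | S ω i = true} = ENNReal.ofReal p)
    (L : Set ℕ) (hL : L.Infinite) (d : ℕ → Bool) :
    P {ω | ∀ l ∈ L, S ω l ≠ d l} = 0 := by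
  set r := max (ENNReal.ofReal p) (1 - ENNReal.ofReal p) with hrdef
  have hple : ENNReal.ofReal p ≤ 1 := by
    rw [← ENNReal.ofReal_one]
    exact ENNReal.ofReal_le_ofReal hp.2.le
  have hr1 : r < 1 := by
    refine max_lt ?_ ?_
    · rw [← ENNReal.ofReal_one]
      exact ENNReal.ofReal_lt_ofReal_iff_of_nonneg hp.1.le |>.mpr hp.2
    · refine ENNReal.sub_lt_self ENNReal.one_ne_top one_ne_zero ?_
      simpa using (ENNReal.ofReal_pos.mpr hp.1).ne'
  have hmeasset : ∀ l (c : Bool), MeasurableSet {ω | S ω l = c} := by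
    intro l c
    exact (hmeas l) (MeasurableSet.singleton c)
  have hfac : ∀ l (c : Bool), P {ω | S ω l = c} ≤ r := by
    intro l c
    cases c
    · have hc : {ω | S ω l = false} = {ω | S ω l = true}ᶜ := by
        ext ω; simp
      rw [hc, measure_compl (hmeasset l true) (measure_ne_top P _), measure_univ, hbias l]
      exact le_max_right _ _
    · rw [hbias l]; exact le_max_left _ _
  have hbound : ∀ n : ℕ, P {ω | ∀ l ∈ L, S ω l ≠ d l} ≤ r ^ n := by
    intro n
    obtain ⟨t, htL, htfin, htcard⟩ := hL.exists_subset_ncard_eq n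
    set F := htfin.toFinset with hFdef
    have hFcard : F.card = n := by
      rw [hFdef, ← Set.ncard_eq_toFinset_card t htfin]
      exact htcard
    have hsub : {ω | ∀ l ∈ L, S ω l ≠ d l} ⊆
        ⋂ l ∈ F, (fun ω => S ω l) ⁻¹' {!(d l)} := by
      intro ω hω
      simp only [Set.mem_iInter, Set.mem_preimage, Set.mem_singleton_iff]
      intro l hlF
      have hlL : l ∈ L := htL (htfin.mem_toFinset.mp hlF)
      have := hω l hlL
      cases h : S ω l <;> cases hd : d l <;> simp_all
    refine le_trans (measure_mono hsub) ?_
    rw [hindep.measure_inter_preimage_eq_mul F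
      (fun l _ => MeasurableSet.singleton (!(d l)))]
    calc ∏ l ∈ F, P ((fun ω => S ω l) ⁻¹' {!(d l)})
        ≤ ∏ _l ∈ F, r := by
          refine Finset.prod_le_prod' fun l _ => ?_
          have : ((fun ω => S ω l) ⁻¹' {!(d l)}) = {ω | S ω l = !(d l)} := by
            ext ω; simp
          rw [this]
          exact hfac l _
      _ = r ^ n := by rw [Finset.prod_const, hFcard]
  have htends := ENNReal.tendsto_pow_atTop_nhds_zero_of_lt_one hr1
  exact le_antisymm (ge_of_tendsto' htends hbound |>.trans le_rfl) zero_le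
end

section FinalAssembly

/-- Candidate ancestors with heights in a rational window. -/
def LSet (g : ℝ → ℝ) (b : ℕ → ℝ) (i j : ℕ) (q₁ q₂ : ℚ) : Set ℕ :=
  {l | g (b l) ∈ Set.Ioo (q₁:ℝ) (q₂:ℝ) ∧ l ≠ i ∧ l ≠ j ∧
    Set.Icc (aPt g (b l)) (cPt g (b l)) ⊆ Set.Icc (aPt g (b i)) (cPt g (b i)) ∧
    Set.Icc (aPt g (b j)) (cPt g (b j)) ⊆ Set.Icc (aPt g (b l)) (cPt g (b l))}

/-- The original side of the block of `j` relative to `b l`. -/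
def dSide (g : ℝ → ℝ) (b : ℕ → ℝ) (j l : ℕ) : Bool := decide (b l < aPt g (b j))

end FinalAssembly

open ProbabilityTheory in
/-- For a CRT excursion decorated with i.i.d. signs of bias `p ∈ (0,1)`,
property (A) holds almost surely. -/
theorem stmt12 (g : ℝ → ℝ) (hg : IsCRT g) (b : ℕ → ℝ) (hb : IsEnum g b)
    (p : ℝ) (hp : p ∈ Set.Ioo (0:ℝ) 1)
    {Ω : Type*} [MeasurableSpace Ω] (P : Measure Ω) [IsProbabilityMeasure P]
    (S : Ω → ℕ → Bool)
    (hmeas : ∀ i, Measurable fun ω => S ω i)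
    (hindep : iIndepFun (fun i ω => S ω i) P)
    (hbias : ∀ i, P {ω | S ω i = true} = ENNReal.ofReal p) :
    ∀ᵐ ω ∂P, PropA g b (S ω) := by
  classical
  have key : ∀ᵐ ω ∂P, ∀ (i : ℕ) (j : ℕ) (q₁ : ℚ) (q₂ : ℚ),
      (LSet g b i j q₁ q₂).Infinite →
        (∃ l ∈ LSet g b i j q₁ q₂, S ω l = dSide g b j l) ∧
        (∃ l ∈ LSet g b i j q₁ q₂, S ω l = !(dSide g b j l)) := by
    rw [MeasureTheory.ae_all_iff]
    intro i
    rw [MeasureTheory.ae_all_iff]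
    intro j
    rw [MeasureTheory.ae_all_iff]
    intro q₁
    rw [MeasureTheory.ae_all_iff]
    intro q₂
    by_cases hinf : (LSet g b i j q₁ q₂).Infinite
    · have h1 := prob_all_ne_sign P S hmeas hindep hp hbias _ hinf (dSide g b j)
      have h2 := prob_all_ne_sign P S hmeas hindep hp hbias _ hinf
        (fun l => !(dSide g b j l))
      rw [MeasureTheory.ae_iff]
      refine measure_mono_null ?_ (measure_union_null h1 h2)
      intro ω hω
      have hω' : ¬ ((∃ l ∈ LSet g b i j q₁ q₂, S ω l = dSide g b j l) ∧
          (∃ l ∈ LSet g b i j q₁ q₂, S ω l = !(dSide g b j l))) :=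
        fun hab => hω (fun _ => hab)
      rcases not_and_or.mp hω' with h | h
      · exact Or.inl (fun l hl hc => h ⟨l, hl, hc⟩)
      · exact Or.inr (fun l hl hc => h ⟨l, hl, hc⟩)
    · exact MeasureTheory.ae_of_all _ (fun ω h => absurd h hinf)
  filter_upwards [key] with ω hω
  unfold PropA
  intro i j hij hsub
  have hbi := bf_enum hg hb i
  have hbj := bf_enum hg hb j
  simp only [aI', cI', bI', aI, cI] at hsub ⊢
  have hlenj : aPt g (b j) < cPt g (b j) := hbj.a_lt.trans hbj.lt_c
  have hleni : aPt g (b i) < cPt g (b i) := hbi.a_lt.trans hbi.lt_c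
  have hnej : phi g b (S ω) (aPt g (b j)) ≤
      phi g b (S ω) (aPt g (b j)) + (cPt g (b j) - aPt g (b j)) := by linarith
  obtain ⟨hsub1, hsub2⟩ := (Set.Icc_subset_Icc_iff hnej).mp hsub
  have hdesc : Set.Icc (aPt g (b j)) (cPt g (b j)) ⊆
      Set.Icc (aPt g (b i)) (cPt g (b i)) := by
    rcases laminar hg hb hij with h | h | h | h
    · exact h
    · exfalso
      have e1 := phi_mono_desc (s := S ω) hg hb h
      have e2 := phi_len_desc (s := S ω) hg hb (Ne.symm hij) h
      have ha := (h ⟨le_rfl, hleni.le⟩).1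
      have hc := (h ⟨hleni.le, le_rfl⟩).2
      have heq : aPt g (b i) = aPt g (b j) := by linarith
      exact height_ne hg hb hij (by rw [← hbi.ga, heq, hbj.ga])
    · exfalso
      obtain ⟨k, hk1, hk2, hk3, hk4, hk5⟩ := gap_mrca hg hb hij h
      rcases Bool.dichotomy (S ω k) with hsk | hsk
      · have e1 := phi_left_false (s := S ω) hg hb hk4 hk2 hk1.1 hsk
        have e2 := phi_right_false (s := S ω) hg hb hk5 hk3 hk1.2 hsk
        linarith
      · have e1 := phi_left_true (s := S ω) hg hb hk4 hk2 hk1.1 hsk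
        have e2 := phi_right_true (s := S ω) hg hb hk5 hk3 hk1.2 hsk
        linarith
    · exfalso
      obtain ⟨k, hk1, hk2, hk3, hk4, hk5⟩ := gap_mrca hg hb (Ne.symm hij) h
      rcases Bool.dichotomy (S ω k) with hsk | hsk
      · have e1 := phi_left_false (s := S ω) hg hb hk4 hk2 hk1.1 hsk
        have e2 := phi_right_false (s := S ω) hg hb hk5 hk3 hk1.2 hsk
        linarith
      · have e1 := phi_left_true (s := S ω) hg hb hk4 hk2 hk1.1 hsk
        have e2 := phi_right_true (s := S ω) hg hb hk5 hk3 hk1.2 hsk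
        linarith
  obtain ⟨-, -, hh, -⟩ := desc_facts hg hb hij hdesc
  constructor
  · intro y hy
    rw [Metric.mem_closure_iff]
    intro ε hε
    have hlow : max (g (b i)) (y - ε) < min (g (b j)) (y + ε) :=
      max_lt (lt_min hh (by linarith [hy.1])) (lt_min (by linarith [hy.2]) (by linarith))
    obtain ⟨q₁, hq₁1, hq₁2⟩ := exists_rat_btwn hlow
    obtain ⟨q₂, hq₂1, hq₂2⟩ := exists_rat_btwn hq₁2
    have hwin1 : g (b i) < (q₁:ℝ) := lt_of_le_of_lt (le_max_left _ _) hq₁1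
    have hwin3 : (q₂:ℝ) < g (b j) := lt_of_lt_of_le hq₂2 (min_le_left _ _)
    have hinf : (LSet g b i j q₁ q₂).Infinite :=
      window_infinite hg hb hij hdesc hwin1 hq₂1 hwin3
    obtain ⟨⟨l, hlL, hsl⟩, -⟩ := hω i j q₁ q₂ hinf
    obtain ⟨hlh, hlni, hlnj, hlsub_i, hlsub_j⟩ := hlL
    refine ⟨g (b l), ⟨l, rfl, ?_, ?_⟩, ?_⟩
    · have e1 := phi_mono_desc (s := S ω) hg hb hlsub_i
      have e2 := phi_len_desc (s := S ω) hg hb (Ne.symm hlni) hlsub_i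
      intro x hx
      exact ⟨by linarith [hx.1], by linarith [hx.2]⟩
    · have e2 := phi_len_desc (s := S ω) hg hb hlnj hlsub_j
      obtain ⟨-, -, -, hside⟩ := desc_facts hg hb hlnj hlsub_j
      rcases hside with hrt | hlf
      · have hst : S ω l = true := by rw [hsl]; simp [dSide, hrt]
        have e3 := phi_right_true (s := S ω) hg hb hlnj hlsub_j hrt hst
        rw [if_pos hst]
        intro x hx
        exact ⟨by linarith [hx.1], by linarith [hx.2]⟩
      · have hsf : S ω l = false := by
          rw [hsl]
          simp only [dSide, decide_eq_false_iff_not, not_lt]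
          exact ((bf_enum hg hb j).a_lt.trans (bf_enum hg hb j).lt_c).le.trans hlf.le
        have e3 := phi_left_false (s := S ω) hg hb hlnj hlsub_j hlf hsf
        rw [if_neg (by rw [hsf]; exact Bool.false_ne_true)]
        intro x hx
        exact ⟨by linarith [hx.1], by linarith [hx.2]⟩
    · rw [Real.dist_eq, abs_sub_lt_iff]
      have h1 : y - ε < (q₁:ℝ) := lt_of_le_of_lt (le_max_right _ _) hq₁1
      have h2 : (q₂:ℝ) < y + ε := lt_of_lt_of_le hq₂2 (min_le_right _ _)
      exact ⟨by linarith [hlh.1], by linarith [hlh.2]⟩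
  · intro y hy
    rw [Metric.mem_closure_iff]
    intro ε hε
    have hlow : max (g (b i)) (y - ε) < min (g (b j)) (y + ε) :=
      max_lt (lt_min hh (by linarith [hy.1])) (lt_min (by linarith [hy.2]) (by linarith))
    obtain ⟨q₁, hq₁1, hq₁2⟩ := exists_rat_btwn hlow
    obtain ⟨q₂, hq₂1, hq₂2⟩ := exists_rat_btwn hq₁2
    have hwin1 : g (b i) < (q₁:ℝ) := lt_of_le_of_lt (le_max_left _ _) hq₁1
    have hwin3 : (q₂:ℝ) < g (b j) := lt_of_lt_of_le hq₂2 (min_le_left _ _)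
    have hinf : (LSet g b i j q₁ q₂).Infinite :=
      window_infinite hg hb hij hdesc hwin1 hq₂1 hwin3
    obtain ⟨-, ⟨l, hlL, hsl⟩⟩ := hω i j q₁ q₂ hinf
    obtain ⟨hlh, hlni, hlnj, hlsub_i, hlsub_j⟩ := hlL
    refine ⟨g (b l), ⟨l, rfl, ?_, ?_⟩, ?_⟩
    · have e1 := phi_mono_desc (s := S ω) hg hb hlsub_i
      have e2 := phi_len_desc (s := S ω) hg hb (Ne.symm hlni) hlsub_i
      intro x hx
      exact ⟨by linarith [hx.1], by linarith [hx.2]⟩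
    · have e1 := phi_mono_desc (s := S ω) hg hb hlsub_j
      obtain ⟨-, -, -, hside⟩ := desc_facts hg hb hlnj hlsub_j
      rcases hside with hrt | hlf
      · have hsf : S ω l = false := by rw [hsl]; simp [dSide, hrt]
        have e3 := phi_right_false (s := S ω) hg hb hlnj hlsub_j hrt hsf
        rw [if_neg (by rw [hsf]; exact Bool.false_ne_true)]
        intro x hx
        exact ⟨by linarith [hx.1], by linarith [hx.2]⟩
      · have hst : S ω l = true := by
          rw [hsl]
          have : dSide g b j l = false := by
            simp only [dSide, decide_eq_false_iff_not, not_lt]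
            exact ((bf_enum hg hb j).a_lt.trans (bf_enum hg hb j).lt_c).le.trans hlf.le
          rw [this]
          rfl
        have e3 := phi_left_true (s := S ω) hg hb hlnj hlsub_j hlf hst
        rw [if_pos hst]
        intro x hx
        exact ⟨by linarith [hx.1], by linarith [hx.2]⟩
    · rw [Real.dist_eq, abs_sub_lt_iff]
      have h1 : y - ε < (q₁:ℝ) := lt_of_le_of_lt (le_max_right _ _) hq₁1
      have h2 : (q₂:ℝ) < y + ε := lt_of_lt_of_le hq₂2 (min_le_right _ _)
      exact ⟨by linarith [hlh.1], by linarith [hlh.2]⟩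

end
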